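/- arXiv:2102.13480 — 5 statements merged into one kernel-verified Lean document; each statement's English description precedes it below -/
import Mathlib

section
/- Assume 0 < a < 1 and σ < σ_⋆. Then the equilibrium points of (LKS) lying in the closed half-plane {w ≥ 0} are exactly (0, v_⋆), (0, −v_⋆) and (w₃, v₃) = (λ − γσ²/(a−1)², σ/(a−1)), and w₃ > 0. The Jacobian matrix J(w,v) = [[(a−1)v − σ, (a−1)w], [−1/γ, −2v]] at (0, v_⋆) has the two negative eigenvalues (a−1)v_⋆ − σ and −2v_⋆; at (0, −v_⋆) it has the two positive eigenvalues −(a−1)v_⋆ − σ and 2v_⋆; and at (w₃, v₃) it has two real eigenvalues of opposite sign, namely x_{1,2} = −σ/(a−1) ∓ √(σ²/(a−1)² − ((a−1)/γ)(λ − γσ²/(a−1)²)), so (w₃, v₃) is a saddle point. -/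
open Matrix

private lemma det2_aux (p q r s x : ℝ) :
    (!![p, q; r, s] - x • (1 : Matrix (Fin 2) (Fin 2) ℝ)).det
      = (p - x) * (s - x) - q * r := by
  simp [Matrix.det_fin_two, Matrix.sub_apply, Matrix.smul_apply, Matrix.one_apply,
    smul_eq_mul]

/-- For `0 < a < 1` and `σ < σ⋆`: equilibria of
`w' = w((a−1)v − σ)`, `v' = λ/γ − v² − w/γ` in `{w ≥ 0}` are exactly
`(0, v⋆)`, `(0, −v⋆)` and `(w₃, v₃) = (λ − γσ²/(a−1)², σ/(a−1))` with `w₃ > 0`;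
eigenvalue description of the Jacobian at the three points; in particular
`(w₃, v₃)` is a saddle (two real eigenvalues of opposite sign). -/
theorem stmt2 (a σ γ lam vstar : ℝ)
    (ha0 : 0 < a) (ha1 : a < 1) (hσ : 0 < σ) (hγ : 0 < γ) (hlam : 0 < lam)
    (hvstar : vstar = Real.sqrt (lam / γ))
    (hσs : σ < |1 - a| * vstar) :
    -- the equilibrium points in {w ≥ 0} are exactly the three stated points
    (∀ p : ℝ × ℝ, 0 ≤ p.1 →
      ((p.1 * ((a - 1) * p.2 - σ) = 0 ∧ lam / γ - p.2 ^ 2 - p.1 / γ = 0) ↔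
        (p = (0, vstar) ∨ p = (0, -vstar) ∨
          p = (lam - γ * σ ^ 2 / (a - 1) ^ 2, σ / (a - 1))))) ∧
    -- w₃ > 0
    0 < lam - γ * σ ^ 2 / (a - 1) ^ 2 ∧
    -- at (0, v⋆): the two eigenvalues (a−1)v⋆ − σ and −2v⋆ are negative
    ((a - 1) * vstar - σ < 0 ∧ -2 * vstar < 0 ∧
      (∀ x : ℝ,
        (!![(a - 1) * vstar - σ, (a - 1) * 0; -(1 / γ), -2 * vstar]
            - x • (1 : Matrix (Fin 2) (Fin 2) ℝ)).det
          = ((a - 1) * vstar - σ - x) * (-2 * vstar - x))) ∧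
    -- at (0, −v⋆): the two eigenvalues −(a−1)v⋆ − σ and 2v⋆ are positive
    (0 < -(a - 1) * vstar - σ ∧ 0 < 2 * vstar ∧
      (∀ x : ℝ,
        (!![(a - 1) * (-vstar) - σ, (a - 1) * 0; -(1 / γ), -2 * (-vstar)]
            - x • (1 : Matrix (Fin 2) (Fin 2) ℝ)).det
          = (-(a - 1) * vstar - σ - x) * (2 * vstar - x))) ∧
    -- at (w₃, v₃): two real eigenvalues x₁ < 0 < x₂ (saddle point)
    (let Δ : ℝ := σ ^ 2 / (a - 1) ^ 2 -
        ((a - 1) / γ) * (lam - γ * σ ^ 2 / (a - 1) ^ 2);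
     let x1 : ℝ := -σ / (a - 1) - Real.sqrt Δ;
     let x2 : ℝ := -σ / (a - 1) + Real.sqrt Δ;
     0 < Δ ∧ x1 < 0 ∧ 0 < x2 ∧
      (∀ x : ℝ,
        (!![(a - 1) * (σ / (a - 1)) - σ, (a - 1) * (lam - γ * σ ^ 2 / (a - 1) ^ 2);
            -(1 / γ), -2 * (σ / (a - 1))]
            - x • (1 : Matrix (Fin 2) (Fin 2) ℝ)).det
          = (x1 - x) * (x2 - x))) := by

  have ha' : a - 1 < 0 := by linarith
  have hane : a - 1 ≠ 0 := ne_of_lt ha'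
  have hγ' : γ ≠ 0 := ne_of_gt hγ
  have hvpos : 0 < vstar := by
    rw [hvstar]; exact Real.sqrt_pos.2 (div_pos hlam hγ)
  have hv2 : vstar ^ 2 = lam / γ := by
    rw [hvstar, sq, Real.mul_self_sqrt (le_of_lt (div_pos hlam hγ))]
  have habs : |1 - a| = 1 - a := abs_of_pos (by linarith)
  have hσs' : σ < (1 - a) * vstar := by rwa [habs] at hσs
  have hw3 : 0 < lam - γ * σ ^ 2 / (a - 1) ^ 2 := by
    have h1 : σ ^ 2 < ((1 - a) * vstar) ^ 2 := by
      apply sq_lt_sq' _ hσs'; nlinarith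
    have h2 : ((1 - a) * vstar) ^ 2 = (a - 1) ^ 2 * (lam / γ) := by
      rw [mul_pow, hv2]; ring
    have hsq : (0:ℝ) < (a - 1) ^ 2 := by positivity
    rw [sub_pos, div_lt_iff₀ hsq]
    calc γ * σ ^ 2 < γ * ((a-1)^2 * (lam / γ)) := by
          apply mul_lt_mul_of_pos_left _ hγ; rw [← h2]; exact h1
      _ = lam * (a - 1) ^ 2 := by field_simp
  refine ⟨?_, hw3, ⟨by nlinarith, by linarith, ?_⟩, ⟨by nlinarith, by linarith, ?_⟩, ?_⟩
  · rintro ⟨w, v⟩ hw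
    constructor
    · rintro ⟨h1, h2⟩
      rcases mul_eq_zero.1 h1 with h | h
      · simp only at h; subst h
        have hvv : v ^ 2 = vstar ^ 2 := by
          rw [hv2]; simp only at h2; field_simp at h2 ⊢; linarith
        have hv : (v - vstar) * (v + vstar) = 0 := by nlinarith [hvv]
        rcases mul_eq_zero.1 hv with h | h
        · left; rw [Prod.mk.injEq]; exact ⟨rfl, by linarith⟩
        · right; left; rw [Prod.mk.injEq]; exact ⟨rfl, by linarith⟩
      · right; right
        simp only at h h2 ⊢
        have hveq : v = σ / (a - 1) := by field_simp; linarith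
        subst hveq
        have hww : w = lam - γ * σ ^ 2 / (a - 1) ^ 2 := by
          field_simp at h2 ⊢; nlinarith [h2]
        rw [Prod.mk.injEq]; exact ⟨hww, rfl⟩
    · rintro (h | h | h) <;> rw [Prod.mk.injEq] at h <;>
        obtain ⟨h1, h2⟩ := h <;> subst h1 <;> subst h2 <;> simp only
      · exact ⟨by ring, by rw [hv2]; ring⟩
      · refine ⟨by ring, ?_⟩
        have : (-vstar) ^ 2 = lam / γ := by rw [← hv2]; ring
        rw [this]; ring
      · constructor
        · have : (a - 1) * (σ / (a - 1)) - σ = 0 := by field_simp; ring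
          rw [this]; ring
        · field_simp; ring
  · intro x
    rw [det2_aux]; ring
  · intro x
    rw [det2_aux]; ring
  · intro Δ x1 x2
    have hΔ : 0 < Δ := by
      have : 0 < -((a - 1) / γ) * (lam - γ * σ ^ 2 / (a - 1) ^ 2) := by
        apply mul_pos _ hw3
        rw [neg_pos]
        exact div_neg_of_neg_of_pos ha' hγ
      have hsq : (0:ℝ) < σ ^ 2 / (a - 1) ^ 2 := by positivity
      show 0 < σ ^ 2 / (a - 1) ^ 2 - ((a - 1) / γ) * (lam - γ * σ ^ 2 / (a - 1) ^ 2)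
      nlinarith
    have hsqΔ : Real.sqrt Δ ^ 2 = Δ := Real.sq_sqrt (le_of_lt hΔ)
    have hσdiv : 0 < -σ / (a - 1) := div_pos_of_neg_of_neg (by linarith) ha'
    have hx1 : x1 < 0 := by
      show -σ / (a - 1) - Real.sqrt Δ < 0
      have h1 : (-σ / (a - 1)) ^ 2 < Δ := by
        have : 0 < -((a - 1) / γ) * (lam - γ * σ ^ 2 / (a - 1) ^ 2) := by
          apply mul_pos _ hw3
          rw [neg_pos]; exact div_neg_of_neg_of_pos ha' hγ
        have heq : (-σ / (a - 1)) ^ 2 = σ ^ 2 / (a - 1) ^ 2 := by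
          rw [div_pow]; ring_nf
        show (-σ / (a - 1)) ^ 2 < σ ^ 2 / (a - 1) ^ 2 - ((a - 1) / γ) * (lam - γ * σ ^ 2 / (a - 1) ^ 2)
        rw [heq]; nlinarith
      have h2 : -σ / (a - 1) < Real.sqrt Δ := by
        have := Real.sqrt_lt_sqrt (sq_nonneg _) h1
        rwa [Real.sqrt_sq (le_of_lt hσdiv)] at this
      linarith
    refine ⟨hΔ, hx1, ?_, ?_⟩
    · show 0 < -σ / (a - 1) + Real.sqrt Δ
      have := Real.sqrt_nonneg Δ
      linarith
    · intro x
      show _ = (-σ / (a - 1) - Real.sqrt Δ - x) * (-σ / (a - 1) + Real.sqrt Δ - x)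
      rw [det2_aux]
      have e1 : (a - 1) * (σ / (a - 1)) - σ = 0 := by field_simp; ring
      rw [e1]
      have hs2 : Real.sqrt Δ ^ 2
          = (σ / (a - 1)) ^ 2 - ((a - 1) / γ) * (lam - γ * (σ / (a - 1)) ^ 2) :=
        hsqΔ.trans (by show σ ^ 2 / (a - 1) ^ 2 - _ = _; rw [div_pow]; ring)
      rw [show γ * σ ^ 2 / (a - 1) ^ 2 = γ * (σ / (a - 1)) ^ 2 by rw [div_pow]; ring]
      linear_combination hs2
end

section
/- Assume a > 1 and σ < σ_⋆. Then the equilibrium points of (LKS) lying in the closed half-plane {w ≥ 0} are exactly (0, v_⋆), (0, −v_⋆) and (w₃, v₃) = (λ − γσ²/(a−1)², σ/(a−1)), with w₃ > 0. The Jacobian matrix J(w,v) = [[(a−1)v − σ, (a−1)w], [−1/γ, −2v]] at (0, v_⋆) has eigenvalues (a−1)v_⋆ − σ > 0 and −2v_⋆ < 0 (saddle), with eigenvector (0, 1) for the negative eigenvalue and eigenvector (γ(−(1+a)v_⋆ + σ), 1) for the positive eigenvalue; at (0, −v_⋆) it has eigenvalues −(a−1)v_⋆ − σ < 0 and 2v_⋆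 > 0 (saddle), with eigenvector (γ((1+a)v_⋆ + σ), 1) for the negative eigenvalue and eigenvector (0, 1) for the positive eigenvalue; and at (w₃, v₃) both eigenvalues have negative real part. -/
open Matrix

lemma quad_neg_re (b c : ℝ) (hb : 0 < b) (hc : 0 < c) (z : ℂ)
    (h : z ^ 2 + (b : ℂ) * z + (c : ℂ) = 0) : z.re < 0 := by
  obtain ⟨x, y⟩ := z
  rw [Complex.ext_iff] at h
  simp only [pow_two, Complex.mul_re, Complex.mul_im, Complex.add_re, Complex.add_im,
    Complex.ofReal_re, Complex.ofReal_im, Complex.zero_re, Complex.zero_im] at h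
  obtain ⟨h1, h2⟩ := h
  show x < 0
  rcases eq_or_ne y 0 with hy | hy
  · subst hy; nlinarith
  · have h3 : y * (2 * x + b) = 0 := by linear_combination h2
    rcases mul_eq_zero.mp h3 with h | h
    · exact absurd h hy
    · linarith

/-- For `a > 1` and `σ < σ⋆`: equilibria of
`w' = w((a−1)v − σ)`, `v' = λ/γ − v² − w/γ` in `{w ≥ 0}` are exactly
`(0, v⋆)`, `(0, −v⋆)` and `(w₃, v₃)` with `w₃ > 0`; the first two are saddle
points with the stated eigenvalues and eigenvectors, and at `(w₃, v₃)` both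
eigenvalues of the Jacobian have negative real part. -/
theorem stmt3 (a σ γ lam vstar : ℝ)
    (ha : 1 < a) (hσ : 0 < σ) (hγ : 0 < γ) (hlam : 0 < lam)
    (hvstar : vstar = Real.sqrt (lam / γ))
    (hσs : σ < |1 - a| * vstar) :
    -- the equilibrium points in {w ≥ 0} are exactly the three stated points
    (∀ p : ℝ × ℝ, 0 ≤ p.1 →
      ((p.1 * ((a - 1) * p.2 - σ) = 0 ∧ lam / γ - p.2 ^ 2 - p.1 / γ = 0) ↔
        (p = (0, vstar) ∨ p = (0, -vstar) ∨
          p = (lam - γ * σ ^ 2 / (a - 1) ^ 2, σ / (a - 1))))) ∧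
    -- w₃ > 0
    0 < lam - γ * σ ^ 2 / (a - 1) ^ 2 ∧
    -- at (0, v⋆): eigenvalues (a−1)v⋆ − σ > 0 and −2v⋆ < 0 (saddle), with
    -- eigenvector (0,1) for the negative one and (γ(−(1+a)v⋆+σ),1) for the positive one
    (0 < (a - 1) * vstar - σ ∧ -2 * vstar < 0 ∧
      (∀ x : ℝ,
        (!![(a - 1) * vstar - σ, (a - 1) * 0; -(1 / γ), -2 * vstar]
            - x • (1 : Matrix (Fin 2) (Fin 2) ℝ)).det
          = ((a - 1) * vstar - σ - x) * (-2 * vstar - x)) ∧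
      ((!![(a - 1) * vstar - σ, (a - 1) * 0; -(1 / γ), -2 * vstar]).mulVec
          ![(0 : ℝ), 1] = (-2 * vstar) • ![(0 : ℝ), 1]) ∧
      ((!![(a - 1) * vstar - σ, (a - 1) * 0; -(1 / γ), -2 * vstar]).mulVec
          ![γ * (-(1 + a) * vstar + σ), 1]
        = ((a - 1) * vstar - σ) • ![γ * (-(1 + a) * vstar + σ), 1])) ∧
    -- at (0, −v⋆): eigenvalues −(a−1)v⋆ − σ < 0 and 2v⋆ > 0 (saddle), with
    -- eigenvector (γ((1+a)v⋆+σ),1) for the negative one and (0,1) for the positive one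
    (-(a - 1) * vstar - σ < 0 ∧ 0 < 2 * vstar ∧
      (∀ x : ℝ,
        (!![(a - 1) * (-vstar) - σ, (a - 1) * 0; -(1 / γ), -2 * (-vstar)]
            - x • (1 : Matrix (Fin 2) (Fin 2) ℝ)).det
          = (-(a - 1) * vstar - σ - x) * (2 * vstar - x)) ∧
      ((!![(a - 1) * (-vstar) - σ, (a - 1) * 0; -(1 / γ), -2 * (-vstar)]).mulVec
          ![γ * ((1 + a) * vstar + σ), 1]
        = (-(a - 1) * vstar - σ) • ![γ * ((1 + a) * vstar + σ), 1]) ∧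
      ((!![(a - 1) * (-vstar) - σ, (a - 1) * 0; -(1 / γ), -2 * (-vstar)]).mulVec
          ![(0 : ℝ), 1] = (2 * vstar) • ![(0 : ℝ), 1])) ∧
    -- at (w₃, v₃): every (complex) eigenvalue of the Jacobian has negative real part
    (∀ z : ℂ,
      ((!![(a - 1) * (σ / (a - 1)) - σ, (a - 1) * (lam - γ * σ ^ 2 / (a - 1) ^ 2);
          -(1 / γ), -2 * (σ / (a - 1))]).map Complex.ofReal
          - z • (1 : Matrix (Fin 2) (Fin 2) ℂ)).det = 0 → z.re < 0) := by
  have ha1 : (0:ℝ) < a - 1 := by linarith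
  have ha1' : a - 1 ≠ 0 := ha1.ne'
  have hγ' : γ ≠ 0 := hγ.ne'
  have habs : |1 - a| = a - 1 := by rw [abs_of_nonpos (by linarith)]; ring
  rw [habs] at hσs
  have hvpos : 0 < vstar := by
    rw [hvstar]; exact Real.sqrt_pos.mpr (div_pos hlam hγ)
  have hvsq : vstar ^ 2 = lam / γ := by
    rw [hvstar, Real.sq_sqrt (div_pos hlam hγ).le]
  have hvsq' : γ * vstar ^ 2 = lam := by
    rw [hvsq]; field_simp
  have hσ2 : σ ^ 2 < (a - 1) ^ 2 * vstar ^ 2 := by nlinarith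
  have hw3 : 0 < lam - γ * σ ^ 2 / (a - 1) ^ 2 := by
    rw [sub_pos, div_lt_iff₀ (by positivity)]
    nlinarith
  refine ⟨?_, hw3, ⟨by linarith, by linarith, ?_, ?_, ?_⟩,
    ⟨by nlinarith, by linarith, ?_, ?_, ?_⟩, ?_⟩
  · -- equilibria
    intro p hp
    constructor
    · rintro ⟨h1, h2⟩
      rcases mul_eq_zero.mp h1 with h | h
      · have hsq : (p.2 - vstar) * (p.2 + vstar) = 0 := by
          rw [h] at h2
          norm_num at h2
          have h22 : p.2 ^ 2 = vstar ^ 2 := by rw [hvsq]; linarith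
          linear_combination h22
        rcases mul_eq_zero.mp hsq with h' | h'
        · left; rw [Prod.ext_iff]; constructor
          · exact h
          · simpa using sub_eq_zero.mp h'
        · right; left; rw [Prod.ext_iff]; constructor
          · exact h
          · simpa using eq_neg_of_add_eq_zero_left h'
      · right; right
        have hv2 : p.2 = σ / (a - 1) := by
          field_simp
          linarith
        rw [Prod.ext_iff]
        refine ⟨?_, hv2⟩
        rw [hv2] at h2
        field_simp at h2 ⊢
        nlinarith [h2]
    · rintro (h | h | h) <;> subst h <;> constructor
      · simp
      · simp; rw [hvsq]; ring
      · simp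
      · simp; rw [hvsq]; ring
      · simp; field_simp; exact Or.inr (by ring)
      · simp; field_simp; ring
  · intro x
    rw [show (!![(a - 1) * vstar - σ, (a - 1) * 0; -(1 / γ), -2 * vstar]
        - x • (1 : Matrix (Fin 2) (Fin 2) ℝ))
        = !![(a - 1) * vstar - σ - x, (a - 1) * 0; -(1 / γ), -2 * vstar - x] by
      rw [Matrix.one_fin_two]; ext i j; fin_cases i <;> fin_cases j <;> simp]
    rw [Matrix.det_fin_two_of]; ring
  · funext i
    fin_cases i <;>
      (simp [Matrix.mulVec, dotProduct, Fin.sum_univ_two]; (try field_simp); (try ring); (try exact Or.inl (by ring)); (try exact Or.inl trivial))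
  · funext i
    fin_cases i <;>
      (simp [Matrix.mulVec, dotProduct, Fin.sum_univ_two]; (try field_simp); (try ring); (try exact Or.inl (by ring)); (try exact Or.inl trivial))
  · intro x
    rw [show (!![(a - 1) * (-vstar) - σ, (a - 1) * 0; -(1 / γ), -2 * (-vstar)]
        - x • (1 : Matrix (Fin 2) (Fin 2) ℝ))
        = !![(a - 1) * (-vstar) - σ - x, (a - 1) * 0; -(1 / γ), -2 * (-vstar) - x] by
      rw [Matrix.one_fin_two]; ext i j; fin_cases i <;> fin_cases j <;> simp]
    rw [Matrix.det_fin_two_of]; ring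
  · funext i
    fin_cases i <;>
      (simp [Matrix.mulVec, dotProduct, Fin.sum_univ_two]; (try field_simp); (try ring); (try exact Or.inl (by ring)); (try exact Or.inl trivial))
  · funext i
    fin_cases i <;>
      (simp [Matrix.mulVec, dotProduct, Fin.sum_univ_two]; (try field_simp); (try ring); (try exact Or.inl (by ring)); (try exact Or.inl trivial))
  · intro z hz
    have hγc : (γ:ℂ) ≠ 0 := by exact_mod_cast hγ'
    have hac : (a:ℂ) - 1 ≠ 0 := by exact_mod_cast ha1'
    have hquad : z ^ 2 + ((2 * σ / (a - 1) : ℝ) : ℂ) * z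
        + (((a - 1) * (lam - γ * σ ^ 2 / (a - 1) ^ 2) / γ : ℝ) : ℂ) = 0 := by
      rw [Matrix.det_fin_two] at hz
      simp only [Matrix.sub_apply, Matrix.smul_apply, Matrix.map_apply, Matrix.one_apply,
        Matrix.cons_val', Matrix.cons_val_zero, Matrix.cons_val_one, Matrix.head_cons,
        Matrix.head_fin_const, Matrix.empty_val', Matrix.cons_val_fin_one,
        smul_eq_mul, Matrix.of_apply] at hz
      push_cast at hz ⊢
      field_simp at hz ⊢
      linear_combination hz
    exact quad_neg_re _ _ (by positivity) (by positivity) z hquad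
end

section
/- Let a > 0, v₀ > v_⋆, w₀ > 0 and s₀ ∈ ℝ, and let (w, v) be a maximal solution of (LKS) on (s_−, s_+) with w(s₀) = w₀, v(s₀) = v₀. Then s_− is finite, v(s) → +∞ as s → s_−⁺, and as s → s_−⁺: w(s) → +∞ if a < 1; w(s) converges to a finite positive limit if a = 1; and w(s) → 0 if a > 1. -/
open Set Filter Topology

/-- A positive solution of the linear-diffusion traveling-wave system (LKS)
`w' = w((a−1)v − σ)`, `v' = λ/γ − v² − w/γ` on the open interval
`(sm, sp)` (endpoints in `EReal`). -/
def IsLKSSol (a σ γ lam : ℝ) (sm sp : EReal) (w v : ℝ → ℝ) : Prop :=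
  sm < sp ∧
  ∀ s : ℝ, sm < (s : EReal) → (s : EReal) < sp →
    0 < w s ∧
    HasDerivAt w (w s * ((a - 1) * v s - σ)) s ∧
    HasDerivAt v (lam / γ - v s ^ 2 - w s / γ) s

/-- A maximal positive solution of (LKS): it cannot be extended to a solution
with `w > 0` on any strictly larger open interval. -/
def IsMaxLKSSol (a σ γ lam : ℝ) (sm sp : EReal) (w v : ℝ → ℝ) : Prop :=
  IsLKSSol a σ γ lam sm sp w v ∧
  ∀ (tm tp : EReal) (w₁ v₁ : ℝ → ℝ),
    tm ≤ sm → sp ≤ tp → (tm < sm ∨ sp < tp) →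
    (∀ s : ℝ, sm < (s : EReal) → (s : EReal) < sp → w₁ s = w s ∧ v₁ s = v s) →
    ¬ IsLKSSol a σ γ lam tm tp w₁ v₁



/-- Helper: monotonicity from a pointwise derivative bound on `Ioc`. -/
lemma lks_mono_aux {A B : ℝ} {f φ : ℝ → ℝ}
    (hf : ∀ t ∈ Ioc A B, HasDerivAt f (φ t) t)
    (hφ : ∀ t ∈ Ioc A B, 0 ≤ φ t) : MonotoneOn f (Ioc A B) := by
  apply monotoneOn_of_deriv_nonneg (convex_Ioc A B)
  · exact fun t ht => (hf t ht).continuousAt.continuousWithinAt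
  · rw [interior_Ioc]
    exact fun t ht =>
      (hf t (Ioo_subset_Ioc_self ht)).differentiableAt.differentiableWithinAt
  · rw [interior_Ioc]
    intro t ht
    rw [(hf t (Ioo_subset_Ioc_self ht)).deriv]
    exact hφ t (Ioo_subset_Ioc_self ht)

/-- Helper: if `f' ≥ c` on `Ioc A B` then `f t ≤ f B - c (B - t)`. -/
lemma lks_bound_of_deriv_ge {A B c : ℝ} {f φ : ℝ → ℝ} (hAB : A < B)
    (hf : ∀ t ∈ Ioc A B, HasDerivAt f (φ t) t)
    (hφ : ∀ t ∈ Ioc A B, c ≤ φ t) :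
    ∀ t ∈ Ioc A B, f t ≤ f B - c * (B - t) := by
  intro t ht
  have hmono : MonotoneOn (fun x => f x - c * x) (Ioc A B) := by
    apply lks_mono_aux (φ := fun x => φ x - c)
    · intro x hx
      simpa using (show HasDerivAt (fun x => f x - c * x) _ x from (hf x hx).sub ((hasDerivAt_id x).const_mul c))
    · intro x hx; simpa using hφ x hx
  have := hmono ht ⟨hAB, le_rfl⟩ ht.2
  simp only at this
  linarith

/-- Helper: if `f' ≤ c` on `Ioc A B` then `f t ≥ f B - c (B - t)`. -/
lemma lks_bound_of_deriv_le {A B c : ℝ} {f φ : ℝ → ℝ} (hAB : A < B)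
    (hf : ∀ t ∈ Ioc A B, HasDerivAt f (φ t) t)
    (hφ : ∀ t ∈ Ioc A B, φ t ≤ c) :
    ∀ t ∈ Ioc A B, f B - c * (B - t) ≤ f t := by
  intro t ht
  have := lks_bound_of_deriv_ge (f := fun x => -f x) (φ := fun x => -φ x) (c := -c) hAB
    (fun x hx => (hf x hx).neg) (fun x hx => neg_le_neg (hφ x hx)) t ht
  linarith

lemma lks_v_gt (a σ γ lam : ℝ) (ha : 0 < a) (hσ : 0 < σ) (hγ : 0 < γ) (hlam : 0 < lam)
    (v0 w0 s0 : ℝ) (hv0 : Real.sqrt (lam / γ) < v0) (hw0 : 0 < w0)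
    (sm sp : EReal) (w v : ℝ → ℝ)
    (hmsp : sm < sp)
    (hP : ∀ s : ℝ, sm < (s : EReal) → (s : EReal) < sp →
      0 < w s ∧ HasDerivAt w (w s * ((a - 1) * v s - σ)) s ∧
      HasDerivAt v (lam / γ - v s ^ 2 - w s / γ) s)
    (hs0m : sm < (s0 : EReal)) (hs0p : (s0 : EReal) < sp)
    (hw : w s0 = w0) (hv : v s0 = v0) :
    ∀ t : ℝ, sm < (t : EReal) → t ≤ s0 → Real.sqrt (lam / γ) < v t := by
  set vs := Real.sqrt (lam / γ) with hvs_def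
  have hlg : 0 < lam / γ := div_pos hlam hγ
  have hvs0 : 0 < vs := Real.sqrt_pos.2 hlg
  have hvs2 : vs ^ 2 = lam / γ := Real.sq_sqrt hlg.le
  set U : Set ℝ := {t : ℝ | sm < (t : EReal) ∧ (t : EReal) < sp} with hU_def
  have hUopen : IsOpen U := by
    have : U = (fun t : ℝ => (t : EReal)) ⁻¹' (Ioi sm ∩ Iio sp) := rfl
    rw [this]
    exact (isOpen_Ioi.inter isOpen_Iio).preimage continuous_coe_real_ereal
  have hDU : ∀ t : ℝ, sm < (t : EReal) → t ≤ s0 → t ∈ U := fun t h1 h2 =>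
    ⟨h1, lt_of_le_of_lt (EReal.coe_le_coe_iff.2 h2) hs0p⟩
  have hvcont : ContinuousOn v U := fun t ht =>
    (hP t ht.1 ht.2).2.2.continuousAt.continuousWithinAt
  intro t htm hts
  rcases eq_or_lt_of_le hts with rfl | hlt
  · rw [hv]; exact hv0
  · have htU : t ∈ U := hDU t htm hts
    have hIccU : Icc t s0 ⊆ U := fun x hx =>
      hDU x (lt_of_lt_of_le htm (EReal.coe_le_coe_iff.2 hx.1)) hx.2
    set A : ℝ → ℝ := fun s => ∫ u in t..s, (v u + vs) with hA_def
    have hA : ∀ s ∈ Icc t s0, HasDerivAt A (v s + vs) s := by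
      intro s hs
      have hsU : s ∈ U := hIccU hs
      have hint : IntervalIntegrable (fun u => v u + vs) MeasureTheory.volume t s := by
        apply ContinuousOn.intervalIntegrable
        intro x hx
        have hxU : x ∈ U := by
          apply hIccU
          have h1 : min t s ≤ x := hx.1
          have h2 : x ≤ max t s := hx.2
          constructor
          · exact le_trans (le_min le_rfl hs.1) h1
          · exact le_trans h2 (max_le hlt.le hs.2)
        exact ((hvcont x hxU).add continuousWithinAt_const : ContinuousWithinAt (fun u => v u + vs) U x).mono (fun z hz => hIccU ⟨le_trans (le_min le_rfl hs.1) hz.1, le_trans hz.2 (max_le hlt.le hs.2)⟩)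
      have hmeas : StronglyMeasurableAtFilter (fun u => v u + vs) (𝓝 s) := by
        exact ContinuousOn.stronglyMeasurableAtFilter hUopen ((hvcont.add continuousOn_const : ContinuousOn (fun u => v u + vs) U)) s hsU
      have hcont : ContinuousAt (fun u => v u + vs) s :=
        ((hP s hsU.1 hsU.2).2.2.continuousAt).add continuousAt_const
      exact intervalIntegral.integral_hasDerivAt_right hint hmeas hcont
    set E : ℝ → ℝ := fun s => (v s - vs) * Real.exp (A s) with hE_def
    have hEanti : StrictAntiOn E (Icc t s0) := by
      apply strictAntiOn_of_deriv_neg (convex_Icc t s0)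
      · intro x hx
        have hxU := hIccU hx
        exact (((hP x hxU.1 hxU.2).2.2.continuousAt.sub continuousAt_const).mul
          ((Real.continuous_exp.continuousAt.comp (hA x hx).continuousAt))).continuousWithinAt
      · rw [interior_Icc]
        intro x hx
        have hx' : x ∈ Icc t s0 := Ioo_subset_Icc_self hx
        have hxU := hIccU hx'
        have hdE : HasDerivAt E ((lam / γ - v x ^ 2 - w x / γ) * Real.exp (A x) +
            (v x - vs) * (Real.exp (A x) * (v x + vs))) x :=
          (((hP x hxU.1 hxU.2).2.2).sub_const vs).mul ((hA x hx').exp)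
        rw [hdE.deriv]
        have hwx : 0 < w x := (hP x hxU.1 hxU.2).1
        have hexp : 0 < Real.exp (A x) := Real.exp_pos _
        have : (lam / γ - v x ^ 2 - w x / γ) * Real.exp (A x) +
            (v x - vs) * (Real.exp (A x) * (v x + vs)) = -(w x / γ) * Real.exp (A x) := by
          have : v x ^ 2 - vs ^ 2 = (v x - vs) * (v x + vs) := by ring
          nlinarith [this, hvs2]
        rw [this]
        have : 0 < w x / γ := div_pos hwx hγ
        nlinarith
    have hEt : E s0 < E t := hEanti (left_mem_Icc.2 hlt.le) (right_mem_Icc.2 hlt.le) hlt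
    have hEs0 : 0 < E s0 := by
      have : 0 < v s0 - vs := by rw [hv]; linarith
      exact mul_pos this (Real.exp_pos _)
    have hEtpos : 0 < E t := hEs0.trans hEt
    by_contra hcon
    push_neg at hcon
    have : E t ≤ 0 := mul_nonpos_of_nonpos_of_nonneg (by simpa using sub_nonpos.2 hcon)
      (Real.exp_pos _).le
    linarith

set_option maxHeartbeats 2000000 in
theorem stmt4_main (a σ γ lam : ℝ) (ha : 0 < a) (hσ : 0 < σ) (hγ : 0 < γ) (hlam : 0 < lam)
    (v0 w0 s0 : ℝ) (hv0 : Real.sqrt (lam / γ) < v0) (hw0 : 0 < w0)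
    (sm sp : EReal) (w v : ℝ → ℝ)
    (hmsp : sm < sp)
    (hP : ∀ s : ℝ, sm < (s : EReal) → (s : EReal) < sp →
      0 < w s ∧ HasDerivAt w (w s * ((a - 1) * v s - σ)) s ∧
      HasDerivAt v (lam / γ - v s ^ 2 - w s / γ) s)
    (hmax : ∀ (tm tp : EReal) (w₁ v₁ : ℝ → ℝ),
      tm ≤ sm → sp ≤ tp → (tm < sm ∨ sp < tp) →
      (∀ s : ℝ, sm < (s : EReal) → (s : EReal) < sp → w₁ s = w s ∧ v₁ s = v s) →
      ¬ (tm < tp ∧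
        ∀ s : ℝ, tm < (s : EReal) → (s : EReal) < tp →
          0 < w₁ s ∧ HasDerivAt w₁ (w₁ s * ((a - 1) * v₁ s - σ)) s ∧
          HasDerivAt v₁ (lam / γ - v₁ s ^ 2 - w₁ s / γ) s))
    (hs0m : sm < (s0 : EReal)) (hs0p : (s0 : EReal) < sp)
    (hw : w s0 = w0) (hv : v s0 = v0) :
    ∃ smr : ℝ, sm = (smr : EReal) ∧
      Tendsto v (𝓝[>] smr) atTop ∧
      (a < 1 → Tendsto w (𝓝[>] smr) atTop) ∧
      (a = 1 → ∃ L : ℝ, 0 < L ∧ Tendsto w (𝓝[>] smr) (𝓝 L)) ∧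
      (1 < a → Tendsto w (𝓝[>] smr) (𝓝 0)) := by
  set vs := Real.sqrt (lam / γ) with hvs_def
  have hlg : 0 < lam / γ := div_pos hlam hγ
  have hvs0 : 0 < vs := Real.sqrt_pos.2 hlg
  have hvs2 : vs ^ 2 = lam / γ := Real.sq_sqrt hlg.le
  have hvgt : ∀ t : ℝ, sm < (t : EReal) → t ≤ s0 → vs < v t :=
    lks_v_gt a σ γ lam ha hσ hγ hlam v0 w0 s0 hv0 hw0 sm sp w v hmsp hP hs0m hs0p hw hv
  set y : ℝ → ℝ := fun s => (v s - vs)⁻¹ with hy_def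
  have hy_pos : ∀ t : ℝ, sm < (t : EReal) → t ≤ s0 → 0 < y t := fun t h1 h2 =>
    inv_pos.2 (sub_pos.2 (hvgt t h1 h2))
  have hdy : ∀ t : ℝ, sm < (t : EReal) → t ≤ s0 →
      HasDerivAt y (1 + 2 * vs * y t + (w t / γ) * (y t) ^ 2) t := by
    intro t h1 h2
    simp only [hy_def]
    have hne : v t - vs ≠ 0 := (sub_pos.2 (hvgt t h1 h2)).ne'
    have ht2 : (t : EReal) < sp := lt_of_le_of_lt (EReal.coe_le_coe_iff.2 h2) hs0p
    have hd : HasDerivAt (fun s => v s - vs) (lam / γ - v t ^ 2 - w t / γ) t :=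
      (hP t h1 ht2).2.2.sub_const vs
    have h := hd.inv hne
    refine h.congr_deriv ?_
    rw [← hvs2]
    field_simp
    ring
  -- key upper bound for y
  have key : ∀ t : ℝ, sm < (t : EReal) → t ≤ s0 → y t ≤ y s0 - (s0 - t) := by
    intro t h1 h2
    rcases eq_or_lt_of_le h2 with rfl | hlt
    · simp
    obtain ⟨r, hr1, hr2⟩ := EReal.exists_between_coe_real h1
    have hr2' : r < t := EReal.coe_lt_coe_iff.1 hr2
    have hmem : ∀ x ∈ Ioc r s0, sm < (x : EReal) ∧ x ≤ s0 := fun x hx =>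
      ⟨lt_trans hr1 (EReal.coe_lt_coe_iff.2 hx.1), hx.2⟩
    have hb := lks_bound_of_deriv_ge (c := 1)
      (f := y) (φ := fun x => 1 + 2 * vs * y x + (w x / γ) * (y x) ^ 2)
      (lt_trans hr2' hlt)
      (fun x hx => hdy x (hmem x hx).1 (hmem x hx).2)
      (fun x hx => by
        have h1 := hy_pos x (hmem x hx).1 (hmem x hx).2
        have h2 : (x : EReal) < sp := lt_of_le_of_lt (EReal.coe_le_coe_iff.2 (hmem x hx).2) hs0p
        have h3 := (hP x (hmem x hx).1 h2).1
        have : 0 < w x / γ := div_pos h3 hγ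
        nlinarith)
      t ⟨hr2', hlt.le⟩
    linarith
  have hy0pos : 0 < y s0 := hy_pos s0 hs0m le_rfl
  -- sm is a real number
  have hsm_lb : ((s0 - y s0 - 1 : ℝ) : EReal) ≤ sm := by
    by_contra hcon
    push_neg at hcon
    have h2 : s0 - y s0 - 1 ≤ s0 := by linarith
    have := key _ hcon h2
    have := hy_pos _ hcon h2
    linarith
  have hsm_ne_bot : sm ≠ ⊥ := fun h => by
    rw [h] at hsm_lb
    exact (EReal.coe_ne_bot _) (le_bot_iff.1 hsm_lb)
  have hsm_ne_top : sm ≠ ⊤ := fun h => by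
    rw [h] at hs0m
    exact absurd hs0m (by simp)
  obtain ⟨smr, rfl⟩ : ∃ r : ℝ, sm = (r : EReal) :=
    ⟨sm.toReal, (EReal.coe_toReal hsm_ne_top hsm_ne_bot).symm⟩
  have hsmrlt : smr < s0 := EReal.coe_lt_coe_iff.1 hs0m
  -- restate domain facts on Ioc smr s0
  have hmemD : ∀ t ∈ Ioc smr s0, ((smr : EReal) < (t : EReal) ∧ t ≤ s0) := fun t ht =>
    ⟨EReal.coe_lt_coe_iff.2 ht.1, ht.2⟩
  have hDw : ∀ t ∈ Ioc smr s0, 0 < w t := fun t ht =>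
    (hP t (hmemD t ht).1 (lt_of_le_of_lt (EReal.coe_le_coe_iff.2 ht.2) hs0p)).1
  have hDdw : ∀ t ∈ Ioc smr s0, HasDerivAt w (w t * ((a - 1) * v t - σ)) t := fun t ht =>
    (hP t (hmemD t ht).1 (lt_of_le_of_lt (EReal.coe_le_coe_iff.2 ht.2) hs0p)).2.1
  have hDv : ∀ t ∈ Ioc smr s0, vs < v t := fun t ht => hvgt t (hmemD t ht).1 ht.2
  have hDy : ∀ t ∈ Ioc smr s0, 0 < y t := fun t ht => hy_pos t (hmemD t ht).1 ht.2
  have hDdy : ∀ t ∈ Ioc smr s0,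
      HasDerivAt y (1 + 2 * vs * y t + (w t / γ) * (y t) ^ 2) t := fun t ht =>
    hdy t (hmemD t ht).1 ht.2
  have hveq : ∀ t ∈ Ioc smr s0, v t = vs + (y t)⁻¹ := by
    intro t ht
    have : (y t)⁻¹ = v t - vs := by
      simp only [hy_def, inv_inv]
    linarith
  have hyY : ∀ t ∈ Ioc smr s0, y t ≤ y s0 := by
    intro t ht
    have := key t (hmemD t ht).1 ht.2
    linarith [ht.2]
  -- the function g = y - id is monotone on Ioc smr s0
  have hg_mono : MonotoneOn (fun t => y t - t) (Ioc smr s0) := by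
    apply lks_mono_aux (φ := fun t => 2 * vs * y t + (w t / γ) * (y t) ^ 2)
    · intro t ht
      have := (hDdy t ht).sub (hasDerivAt_id t)
      refine this.congr_deriv ?_
      ring
    · intro t ht
      have h1 := hDy t ht
      have h2 : 0 < w t / γ := div_pos (hDw t ht) hγ
      nlinarith
  -- limit of g from the right at smr
  set gI : ℝ := sInf ((fun t => y t - t) '' Ioo smr s0) with hgI_def
  have hg_bdd : BddBelow ((fun t => y t - t) '' Ioo smr s0) := by
    refine ⟨-s0, ?_⟩
    rintro x ⟨t, ht, rfl⟩
    have := hDy t (Ioo_subset_Ioc_self ht)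
    simp only
    nlinarith [ht.2]
  have hg_tendsto : Tendsto (fun t => y t - t) (𝓝[>] smr) (𝓝 gI) :=
    MonotoneOn.tendsto_nhdsWithin_Ioo_right ⟨(smr + s0)/2, by constructor <;> linarith⟩
      (hg_mono.mono Ioo_subset_Ioc_self) hg_bdd
  set L : ℝ := gI + smr with hL_def
  have hy_tendsto : Tendsto y (𝓝[>] smr) (𝓝 L) := by
    have h2 : Tendsto (fun t : ℝ => (y t - t) + t) (𝓝[>] smr) (𝓝 (gI + smr)) :=
      hg_tendsto.add (tendsto_id.mono_left nhdsWithin_le_nhds)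
    simpa using h2
  have hgI_le : ∀ t ∈ Ioc smr s0, gI ≤ y t - t := by
    intro t ht
    rcases eq_or_lt_of_le ht.2 with rfl | hlt
    · calc gI ≤ y ((smr + t)/2) - ((smr + t)/2) :=
            csInf_le hg_bdd ⟨(smr + t)/2, ⟨by linarith [ht.1], by linarith [ht.1]⟩, rfl⟩
        _ ≤ y t - t := hg_mono ⟨by linarith [ht.1], by linarith [ht.1]⟩ ht (by linarith [ht.1])
    · exact csInf_le hg_bdd ⟨t, ⟨ht.1, hlt⟩, rfl⟩
  have hyL : ∀ t ∈ Ioc smr s0, L + (t - smr) ≤ y t := by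
    intro t ht
    have := hgI_le t ht
    simp only [hL_def]
    linarith
  have hL0 : 0 ≤ L := by
    refine ge_of_tendsto hy_tendsto ?_
    filter_upwards [Ioo_mem_nhdsGT_of_mem (left_mem_Ico.2 hsmrlt)] with t ht
    exact (hDy t (Ioo_subset_Ioc_self ht)).le

  -- log w machinery
  have hDdlw : ∀ t ∈ Ioc smr s0, HasDerivAt (fun x => Real.log (w x)) ((a-1) * v t - σ) t := by
    intro t ht
    have h := (hDdw t ht).log (hDw t ht).ne'
    convert h using 1
    exact (mul_div_cancel_left₀ _ (hDw t ht).ne').symm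
  have hLzero : L = 0 := by
    rcases eq_or_lt_of_le hL0 with h | hLpos
    · exact h.symm
    exfalso
    -- v and w are bounded; limits exist at smr⁺; extend the solution, contradiction
    have hyLlt : ∀ t ∈ Ioc smr s0, L < y t := by
      intro t ht
      have := hyL t ht
      have := ht.1
      linarith
    have hvle : ∀ t ∈ Ioc smr s0, v t ≤ vs + L⁻¹ := by
      intro t ht
      rw [hveq t ht]
      have h1 : (y t)⁻¹ ≤ L⁻¹ := inv_anti₀ hLpos (hyLlt t ht).le
      linarith
    set K : ℝ := |a - 1| * (vs + L⁻¹) + σ with hK_def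
    have hK0 : 0 ≤ K := by
      have : 0 ≤ |a-1| * (vs + L⁻¹) :=
        mul_nonneg (abs_nonneg _) (by positivity)
      rw [hK_def]
      linarith
    have hlwb : ∀ t ∈ Ioc smr s0, |(a-1) * v t - σ| ≤ K := by
      intro t ht
      have h0 : 0 < v t := lt_trans hvs0 (hDv t ht)
      have h1 : |(a-1) * v t| ≤ |a-1| * (vs + L⁻¹) := by
        rw [abs_mul, abs_of_pos h0]
        exact mul_le_mul_of_nonneg_left (hvle t ht) (abs_nonneg _)
      have h2 : |(a-1) * v t - σ| ≤ |(a-1) * v t| + |σ| := by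
        have := abs_add_le ((a-1) * v t) (-σ)
        simpa [sub_eq_add_neg] using this
      rw [abs_of_pos hσ] at h2
      rw [hK_def]
      linarith
    -- bounds for log w
    have hlw_lb : ∀ t ∈ Ioc smr s0, Real.log (w s0) - K * (s0 - t) ≤ Real.log (w t) :=
      lks_bound_of_deriv_le hsmrlt hDdlw
        (fun t ht => (le_of_abs_le (hlwb t ht)))
    have hlw_ub : ∀ t ∈ Ioc smr s0, Real.log (w t) ≤ Real.log (w s0) + K * (s0 - t) := by
      have := lks_bound_of_deriv_ge (c := -K) hsmrlt hDdlw
        (fun t ht => (neg_le_of_abs_le (hlwb t ht)))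
      intro t ht
      have h := this t ht
      linarith [h]
    -- limit of log w at smr⁺
    have hp_mono : MonotoneOn (fun t => Real.log (w t) + K * t) (Ioc smr s0) := by
      apply lks_mono_aux (φ := fun t => ((a-1) * v t - σ) + K)
      · intro t ht
        have := (hDdlw t ht).add ((hasDerivAt_id t).const_mul K)
        refine this.congr_deriv ?_
        ring
      · intro t ht
        have := neg_le_of_abs_le (hlwb t ht)
        linarith
    set pI : ℝ := sInf ((fun t => Real.log (w t) + K * t) '' Ioo smr s0) with hpI_def
    have hp_bdd : BddBelow ((fun t => Real.log (w t) + K * t) '' Ioo smr s0) := by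
      refine ⟨Real.log (w s0) - K * (s0 - smr) + K * smr, ?_⟩
      rintro x ⟨t, ht, rfl⟩
      have h1 := hlw_lb t (Ioo_subset_Ioc_self ht)
      simp only
      nlinarith [ht.1, ht.2, hK0]
    have hp_tendsto : Tendsto (fun t => Real.log (w t) + K * t) (𝓝[>] smr) (𝓝 pI) :=
      MonotoneOn.tendsto_nhdsWithin_Ioo_right ⟨(smr + s0)/2, by constructor <;> linarith⟩
        (hp_mono.mono Ioo_subset_Ioc_self) hp_bdd
    set lwl : ℝ := pI - K * smr with hlwl_def
    have hlw_tendsto : Tendsto (fun t => Real.log (w t)) (𝓝[>] smr) (𝓝 lwl) := by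
      have h2 : Tendsto (fun t : ℝ => (Real.log (w t) + K * t) - K * t) (𝓝[>] smr)
          (𝓝 (pI - K * smr)) :=
        hp_tendsto.sub ((tendsto_id.mono_left nhdsWithin_le_nhds).const_mul K)
      simpa using h2
    set wbar : ℝ := Real.exp lwl with hwbar_def
    have hwbar0 : 0 < wbar := Real.exp_pos _
    have hEvIoc : ∀ᶠ t in 𝓝[>] smr, t ∈ Ioc smr s0 := by
      filter_upwards [Ioo_mem_nhdsGT_of_mem (left_mem_Ico.2 hsmrlt)] with t ht
      exact Ioo_subset_Ioc_self ht
    have hw_tendsto : Tendsto w (𝓝[>] smr) (𝓝 wbar) := by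
      have h1 : Tendsto (fun t => Real.exp (Real.log (w t))) (𝓝[>] smr) (𝓝 (Real.exp lwl)) :=
        (Real.continuous_exp.continuousAt.tendsto).comp hlw_tendsto
      refine Tendsto.congr' ?_ h1
      filter_upwards [hEvIoc] with t ht
      exact Real.exp_log (hDw t ht)
    set vbar : ℝ := vs + L⁻¹ with hvbar_def
    have hv_tendsto : Tendsto v (𝓝[>] smr) (𝓝 vbar) := by
      have h1 : Tendsto (fun t => vs + (y t)⁻¹) (𝓝[>] smr) (𝓝 (vs + L⁻¹)) :=
        tendsto_const_nhds.add (hy_tendsto.inv₀ hLpos.ne')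
      refine Tendsto.congr' ?_ h1
      filter_upwards [hEvIoc] with t ht
      exact (hveq t ht).symm
    -- the vector field
    set F : ℝ × ℝ → ℝ × ℝ :=
      fun p => (p.1 * ((a-1) * p.2 - σ), lam / γ - p.2 ^ 2 - p.1 / γ) with hF_def
    have hFcd : ContDiff ℝ 1 F := by
      apply ContDiff.prodMk
      · exact contDiff_fst.mul ((contDiff_const.mul contDiff_snd).sub contDiff_const)
      · exact (contDiff_const.sub (contDiff_snd.pow 2)).sub (contDiff_fst.div_const γ)
    set x₀ : ℝ × ℝ := (wbar, vbar) with hx0_def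
    set Wt : ℝ → ℝ × ℝ := fun s => (w s, v s) with hWt_def
    have hWt_tendsto : Tendsto Wt (𝓝[>] smr) (𝓝 x₀) := hw_tendsto.prodMk_nhds hv_tendsto
    have hWt_deriv : ∀ s ∈ Ioc smr s0, HasDerivAt Wt (F (Wt s)) s := fun s hs =>
      (hDdw s hs).prodMk ((hP s (hmemD s hs).1
        (lt_of_le_of_lt (EReal.coe_le_coe_iff.2 hs.2) hs0p)).2.2)
    -- Lipschitz neighborhood
    obtain ⟨Kl, tset, htset, hlip⟩ := (hFcd.contDiffAt (x := x₀)).exists_lipschitzOnWith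
    obtain ⟨ε₁, hε₁, hball⟩ := Metric.mem_nhds_iff.1 htset
    set r : ℝ := min (ε₁ / 2) (wbar / 2) with hr_def
    have hr0 : 0 < r := lt_min (by linarith) (by linarith)
    have hrball : Metric.closedBall x₀ r ⊆ tset := by
      refine subset_trans ?_ hball
      intro p hp
      have : dist p x₀ ≤ r := Metric.mem_closedBall.1 hp
      exact Metric.mem_ball.2 (lt_of_le_of_lt this (lt_of_le_of_lt (min_le_left _ _) (by linarith)))
    have hball_pos : ∀ p ∈ Metric.closedBall x₀ r, 0 < p.1 := by
      intro p hp
      have h1 : dist p.1 x₀.1 ≤ dist p x₀ :=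
        (le_max_left _ _).trans_eq (Prod.dist_eq (x := p) (y := x₀)).symm
      have h2 : dist p x₀ ≤ r := Metric.mem_closedBall.1 hp
      have h3 : |p.1 - wbar| ≤ wbar / 2 := by
        rw [← Real.dist_eq]
        exact le_trans (h1.trans h2) (min_le_right _ _)
      have := abs_le.1 h3
      simp only [hx0_def] at *
      linarith [this.1]
    have hKlip : ∀ t : ℝ, LipschitzOnWith Kl F (Metric.closedBall x₀ r) :=
      fun _ => hlip.mono hrball
    -- local solution through x₀ at time smr
    obtain ⟨u, hu0, ε₂, hε₂, hu⟩ :=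
      ContDiffAt.exists_forall_mem_closedBall_exists_eq_forall_mem_Ioo_hasDerivAt₀ (hFcd.contDiffAt (x := x₀)) smr
    have hucont : ContinuousAt u smr :=
      (hu smr ⟨by linarith, by linarith⟩).continuousAt
    obtain ⟨δ₁, hδ₁, huball⟩ : ∃ δ₁ > 0, ∀ x : ℝ, dist x smr < δ₁ → u x ∈ Metric.ball x₀ r := by
      have : u ⁻¹' Metric.ball x₀ r ∈ 𝓝 smr := by
        apply hucont
        rw [hu0]
        exact Metric.ball_mem_nhds _ hr0
      obtain ⟨δ₁, hδ₁, hsub⟩ := Metric.mem_nhds_iff.1 this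
      exact ⟨δ₁, hδ₁, fun x hx => hsub (Metric.mem_ball.2 hx)⟩
    -- choose the matching interval (smr, d]
    set b0 : ℝ := min s0 (smr + min ε₂ δ₁) with hb0_def
    have hb0gt : smr < b0 := lt_min hsmrlt (by have := lt_min hε₂ hδ₁; linarith)
    obtain ⟨d, hd, hdsub⟩ : ∃ d ∈ Ioi smr, Ioc smr d ⊆
        {s : ℝ | Wt s ∈ Metric.ball x₀ r ∧ s < b0} := by
      rw [← mem_nhdsGT_iff_exists_Ioc_subset]
      have h1 : ∀ᶠ s in 𝓝[>] smr, Wt s ∈ Metric.ball x₀ r :=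
        hWt_tendsto (Metric.ball_mem_nhds _ hr0)
      have h2 : ∀ᶠ s in 𝓝[>] smr, s < b0 :=
        eventually_nhdsWithin_of_eventually_nhds (eventually_lt_nhds hb0gt)
      filter_upwards [h1, h2] with s hs1 hs2
      exact ⟨hs1, hs2⟩
    have hdmem := hdsub ⟨hd, le_rfl⟩
    have hds0 : d < s0 := lt_of_lt_of_le hdmem.2 (min_le_left _ _)
    have hdeps : d - smr < min ε₂ δ₁ := by
      have := lt_of_lt_of_le hdmem.2 (min_le_right _ _)
      linarith
    have hdsmr : smr < d := hd
    -- Wbar : the continuous extension of Wt to smr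
    set Wbar : ℝ → ℝ × ℝ := Function.update Wt smr x₀ with hWbar_def
    have hWbar_eq : ∀ s : ℝ, s ≠ smr → Wbar s = Wt s := fun s hs =>
      Function.update_of_ne hs _ _
    have hWbar_smr : Wbar smr = x₀ := Function.update_self _ _ _
    have hIocD : Ioc smr d ⊆ Ioc smr s0 := Ioc_subset_Ioc le_rfl hds0.le
    have hWbar_tendsto : Tendsto Wbar (𝓝[>] smr) (𝓝 x₀) := by
      refine hWt_tendsto.congr' ?_
      filter_upwards [self_mem_nhdsWithin] with s (hs : smr < s)
      exact (hWbar_eq s (ne_of_gt hs)).symm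
    have hWbar_deriv : ∀ s ∈ Ioc smr d, HasDerivAt Wbar (F (Wbar s)) s := by
      intro s hs
      have h1 : Wbar =ᶠ[𝓝 s] Wt := by
        filter_upwards [IsOpen.mem_nhds isOpen_Ioi hs.1] with x (hx : smr < x)
        exact hWbar_eq x (ne_of_gt hx)
      rw [hWbar_eq s (ne_of_gt hs.1)]
      exact (hWt_deriv s (hIocD hs)).congr_of_eventuallyEq h1
    -- derivative of Wbar at smr (from the right)
    have hWbar_deriv_smr : HasDerivWithinAt Wbar (F x₀) (Ici smr) smr := by
      apply hasDerivWithinAt_Ici_of_tendsto_deriv (s := Ioo smr d)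
      · intro x hx
        exact (hWbar_deriv x (Ioo_subset_Ioc_self hx)).differentiableAt.differentiableWithinAt
      · show Tendsto Wbar (𝓝[Ioo smr d] smr) (𝓝 (Wbar smr))
        rw [hWbar_smr]
        exact hWbar_tendsto.mono_left (nhdsWithin_mono _ Ioo_subset_Ioi_self)
      · exact Ioo_mem_nhdsGT_of_mem (left_mem_Ico.2 hdsmr)
      · have h1 : Tendsto (fun x => F (Wt x)) (𝓝[>] smr) (𝓝 (F x₀)) :=
          (hFcd.continuous.continuousAt.tendsto).comp hWt_tendsto
        refine Tendsto.congr' ?_ h1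
        filter_upwards [Ioo_mem_nhdsGT_of_mem (left_mem_Ico.2 hdsmr)] with x hx
        rw [(hWbar_deriv x (Ioo_subset_Ioc_self hx)).deriv,
          hWbar_eq x (ne_of_gt hx.1)]
    -- uniqueness of solutions on [smr, d]
    have hEqOn : EqOn Wbar u (Icc smr d) := by
      have hcW : ContinuousOn Wbar (Icc smr d) := by
        intro x hx
        rcases eq_or_lt_of_le hx.1 with rfl | hlt
        · show Tendsto Wbar (𝓝[Icc smr d] smr) (𝓝 (Wbar smr))
          rw [hWbar_smr]
          have hsub2 : Icc smr d ⊆ insert smr (Ioi smr) := by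
            intro z hz
            rcases eq_or_lt_of_le hz.1 with rfl | h
            · exact mem_insert _ _
            · exact mem_insert_of_mem _ h
          refine Tendsto.mono_left ?_ (nhdsWithin_mono _ hsub2)
          rw [nhdsWithin_insert]
          refine Tendsto.sup ?_ hWbar_tendsto
          have := tendsto_pure_nhds Wbar smr
          rwa [hWbar_smr] at this
        · have h1 : Wbar =ᶠ[𝓝 x] Wt := by
            filter_upwards [IsOpen.mem_nhds isOpen_Ioi hlt] with z (hz : smr < z)
            exact hWbar_eq z (ne_of_gt hz)
          have h2 : ContinuousAt Wt x :=
            (hWt_deriv x (hIocD ⟨hlt, hx.2⟩)).continuousAt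
          exact (h2.congr h1.symm).continuousWithinAt
      have hdW : ∀ t ∈ Ico smr d, HasDerivWithinAt Wbar (F (Wbar t)) (Ici t) t := by
        intro t ht
        rcases eq_or_lt_of_le ht.1 with rfl | hlt
        · rw [hWbar_smr]
          exact hWbar_deriv_smr
        · exact (hWbar_deriv t ⟨hlt, ht.2.le⟩).hasDerivWithinAt
      have hmW : ∀ t ∈ Ico smr d, Wbar t ∈ Metric.closedBall x₀ r := by
        intro t ht
        rcases eq_or_lt_of_le ht.1 with rfl | hlt
        · rw [hWbar_smr]
          exact Metric.mem_closedBall_self hr0.le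
        · rw [hWbar_eq t (ne_of_gt hlt)]
          exact Metric.ball_subset_closedBall (hdsub ⟨hlt, ht.2.le⟩).1
      have hcU : ContinuousOn u (Icc smr d) := by
        intro x hx
        refine (hu x ⟨?_, ?_⟩).continuousAt.continuousWithinAt
        · linarith [hx.1]
        · have := lt_of_le_of_lt hx.2 (by linarith [lt_of_lt_of_le hdeps (min_le_left ε₂ δ₁)] :
            d < smr + ε₂)
          linarith
      have hdU : ∀ t ∈ Ico smr d, HasDerivWithinAt u (F (u t)) (Ici t) t := by
        intro t ht
        refine (hu t ⟨?_, ?_⟩).hasDerivWithinAt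
        · linarith [ht.1]
        · have hde : d < smr + ε₂ := by linarith [lt_of_lt_of_le hdeps (min_le_left ε₂ δ₁)]
          linarith [ht.2]
      have hmU : ∀ t ∈ Ico smr d, u t ∈ Metric.closedBall x₀ r := by
        intro t ht
        apply Metric.ball_subset_closedBall
        apply huball
        rw [Real.dist_eq, abs_of_nonneg (by linarith [ht.1] : (0:ℝ) ≤ t - smr)]
        have hdd : d - smr < δ₁ := lt_of_lt_of_le hdeps (min_le_right ε₂ δ₁)
        linarith [ht.2]
      exact ODE_solution_unique_of_mem_Icc_right (fun t _ => hKlip t) hcW hdW hmW hcU hdU hmU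
        (by rw [hWbar_smr, hu0])
    -- glue the solutions
    set δ₃ : ℝ := min ε₂ δ₁ / 2 with hδ₃_def
    have hδ₃0 : 0 < δ₃ := by
      have := lt_min hε₂ hδ₁
      rw [hδ₃_def]
      linarith
    have hδ₃ε₂ : δ₃ < ε₂ := by
      have h1 : min ε₂ δ₁ ≤ ε₂ := min_le_left _ _
      have h2 : 0 < min ε₂ δ₁ := lt_min hε₂ hδ₁
      rw [hδ₃_def]; linarith
    have hδ₃δ₁ : δ₃ < δ₁ := by
      have h1 : min ε₂ δ₁ ≤ δ₁ := min_le_right _ _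
      have h2 : 0 < min ε₂ δ₁ := lt_min hε₂ hδ₁
      rw [hδ₃_def]; linarith
    set w₁ : ℝ → ℝ := fun s => if smr < s then w s else (u s).1 with hw₁_def
    set v₁ : ℝ → ℝ := fun s => if smr < s then v s else (u s).2 with hv₁_def
    refine hmax ((smr - δ₃ : ℝ) : EReal) sp w₁ v₁
      (EReal.coe_le_coe_iff.2 (by linarith)) le_rfl
      (Or.inl (EReal.coe_lt_coe_iff.2 (by linarith)))
      (fun s h1 h2 => ?_) ⟨?_, ?_⟩
    · have : smr < s := EReal.coe_lt_coe_iff.1 h1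
      constructor <;> simp only [hw₁_def, hv₁_def, if_pos this]
    · exact lt_trans (EReal.coe_lt_coe_iff.2 (by linarith)) hmsp
    · intro s h1 h2
      by_cases hs : smr < s
      · have hEv : ∀ᶠ x in 𝓝 s, w₁ x = w x ∧ v₁ x = v x := by
          filter_upwards [IsOpen.mem_nhds isOpen_Ioi hs] with z (hz : smr < z)
          constructor <;> simp only [hw₁_def, hv₁_def, if_pos hz]
        have hPs := hP s (EReal.coe_lt_coe_iff.2 hs) h2
        refine ⟨?_, ?_, ?_⟩
        · rw [show w₁ s = w s by simp only [hw₁_def, if_pos hs]]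
          exact hPs.1
        · rw [show w₁ s = w s by simp only [hw₁_def, if_pos hs],
            show v₁ s = v s by simp only [hv₁_def, if_pos hs]]
          exact hPs.2.1.congr_of_eventuallyEq
            (by filter_upwards [hEv] with z hz using hz.1)
        · rw [show w₁ s = w s by simp only [hw₁_def, if_pos hs],
            show v₁ s = v s by simp only [hv₁_def, if_pos hs]]
          exact hPs.2.2.congr_of_eventuallyEq
            (by filter_upwards [hEv] with z hz using hz.2)
      · push_neg at hs
        have hssmr : s - smr ≤ 0 := by linarith
        have hsmem : s ∈ Ioo (smr - δ₃) d :=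
          ⟨EReal.coe_lt_coe_iff.1 h1, lt_of_le_of_lt hs hdsmr⟩
        have hEq1 : ∀ x ∈ Ioo (smr - δ₃) d, w₁ x = (u x).1 ∧ v₁ x = (u x).2 := by
          intro x hx
          by_cases hxs : smr < x
          · have hux : Wt x = u x := by
              rw [← hEqOn ⟨hxs.le, hx.2.le⟩, hWbar_eq x (ne_of_gt hxs)]
            constructor
            · simp only [hw₁_def, if_pos hxs]
              rw [← hux]
            · simp only [hv₁_def, if_pos hxs]
              rw [← hux]
          · constructor
            · simp only [hw₁_def, if_neg hxs]
            · simp only [hv₁_def, if_neg hxs]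
        have hEvU : ∀ᶠ x in 𝓝 s, w₁ x = (u x).1 ∧ v₁ x = (u x).2 := by
          filter_upwards [IsOpen.mem_nhds isOpen_Ioo hsmem] with z hz
          exact hEq1 z hz
        have huder : HasDerivAt u (F (u s)) s := by
          refine hu s ⟨?_, ?_⟩
          · have := hsmem.1; linarith
          · linarith
        have hd1 : HasDerivAt (fun x => (u x).1) (F (u s)).1 s := by
          have := (hasFDerivAt_fst (E := ℝ) (F := ℝ) (𝕜 := ℝ)).comp_hasDerivAt s huder
          simpa using (show HasDerivAt (fun x => (u x).1) _ s from this)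
        have hd2 : HasDerivAt (fun x => (u x).2) (F (u s)).2 s := by
          have := (hasFDerivAt_snd (E := ℝ) (F := ℝ) (𝕜 := ℝ)).comp_hasDerivAt s huder
          simpa using (show HasDerivAt (fun x => (u x).2) _ s from this)
        have hus_ball : u s ∈ Metric.closedBall x₀ r := by
          apply Metric.ball_subset_closedBall
          apply huball
          rw [Real.dist_eq, abs_of_nonpos hssmr]
          linarith [hsmem.1]
        have hw₁s : w₁ s = (u s).1 := by simp only [hw₁_def, if_neg (not_lt.2 hs)]
        have hv₁s : v₁ s = (u s).2 := by simp only [hv₁_def, if_neg (not_lt.2 hs)]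
        refine ⟨?_, ?_, ?_⟩
        · rw [hw₁s]
          exact hball_pos _ hus_ball
        · rw [hw₁s, hv₁s]
          have : (F (u s)).1 = (u s).1 * ((a - 1) * (u s).2 - σ) := by
            simp only [hF_def]
          rw [← this]
          exact hd1.congr_of_eventuallyEq
            (by filter_upwards [hEvU] with z hz using hz.1)
        · rw [hw₁s, hv₁s]
          have : (F (u s)).2 = lam / γ - (u s).2 ^ 2 - (u s).1 / γ := by
            simp only [hF_def]
          rw [← this]
          exact hd2.congr_of_eventuallyEq
            (by filter_upwards [hEvU] with z hz using hz.2)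

  
  -- L = 0 : y tends to zero from the right
  have hEvIoc2 : ∀ᶠ t in 𝓝[>] smr, t ∈ Ioc smr s0 := by
    filter_upwards [Ioo_mem_nhdsGT_of_mem (left_mem_Ico.2 hsmrlt)] with t ht
    exact Ioo_subset_Ioc_self ht
  have hyInner : Tendsto y (𝓝[>] smr) (𝓝[>] (0:ℝ)) := by
    rw [tendsto_nhdsWithin_iff]
    constructor
    · rw [← hLzero]; exact hy_tendsto
    · filter_upwards [hEvIoc2] with t ht
      exact hDy t ht
  have hv_top : Tendsto v (𝓝[>] smr) atTop := by
    have h1 : Tendsto (fun t => (y t)⁻¹) (𝓝[>] smr) atTop :=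
      tendsto_inv_nhdsGT_zero.comp hyInner
    have h2 : Tendsto (fun t => vs + (y t)⁻¹) (𝓝[>] smr) atTop :=
      tendsto_atTop_add_const_left _ vs h1
    refine Tendsto.congr' ?_ h2
    filter_upwards [hEvIoc2] with t ht
    exact (hveq t ht).symm
  have hlogy_bot : Tendsto (fun t => Real.log (y t)) (𝓝[>] smr) atBot :=
    Real.tendsto_log_nhdsGT_zero.comp hyInner
  have hws0 : 0 < w s0 := hDw s0 ⟨hsmrlt, le_rfl⟩
  -- derivative of ζ = log w + (1-a) log y
  have hDdz : ∀ t ∈ Ioc smr s0,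
      HasDerivAt (fun x => Real.log (w x) + (1-a) * Real.log (y x))
        (((1-a)*vs - σ) + (1-a) * (w t * y t) / γ) t := by
    intro t ht
    have hyne : y t ≠ 0 := (hDy t ht).ne'
    have hly : HasDerivAt (fun x => Real.log (y x))
        ((1 + 2 * vs * y t + (w t / γ) * (y t) ^ 2) / y t) t :=
      (hDdy t ht).log hyne
    have h := (hDdlw t ht).add (hly.const_mul (1-a))
    refine h.congr_deriv ?_
    rw [hveq t ht]
    field_simp
    ring
  have hlogY : ∀ t ∈ Ioc smr s0, Real.log (y t) ≤ Real.log (y s0) := by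
    intro t ht
    have := hyY t ht
    exact Real.log_le_log (hDy t ht) this
  refine ⟨smr, rfl, hv_top, ?_, ?_, ?_⟩
  -- case a < 1
  · intro h_a
    have h1a : 0 ≤ 1 - a := by linarith
    set c1 : ℝ := (1-a)*vs - σ with hc1_def
    have hz_ub : ∀ t ∈ Ioc smr s0,
        Real.log (w t) + (1-a) * Real.log (y t) ≤
          (Real.log (w s0) + (1-a) * Real.log (y s0)) + |c1| * (s0 - smr) := by
      have hb := lks_bound_of_deriv_ge (c := c1) hsmrlt hDdz
        (fun t ht => by
          have h1 : 0 ≤ (1-a) * (w t * y t) / γ :=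
            div_nonneg (mul_nonneg h1a (mul_nonneg (hDw t ht).le (hDy t ht).le)) hγ.le
          linarith)
      intro t ht
      have h2 := hb t ht
      have h3 : -c1 * (s0 - t) ≤ |c1| * (s0 - smr) := by
        have h4 : -c1 ≤ |c1| := neg_le_abs _
        have h5 : (0:ℝ) ≤ s0 - t := by linarith [ht.2]
        have h6 : s0 - t ≤ s0 - smr := by linarith [ht.1]
        nlinarith [abs_nonneg c1]
      linarith
    set M2 : ℝ := Real.exp ((Real.log (w s0) + (1-a) * Real.log (y s0)) + |c1| * (s0 - smr)
        + a * Real.log (y s0)) with hM2_def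
    have hwy_ub : ∀ t ∈ Ioc smr s0, w t * y t ≤ M2 := by
      intro t ht
      have hw0' := hDw t ht
      have hy0' := hDy t ht
      have h1 : Real.log (w t * y t) = Real.log (w t) + Real.log (y t) :=
        Real.log_mul hw0'.ne' hy0'.ne'
      have h2 : Real.log (w t) + Real.log (y t) =
          (Real.log (w t) + (1-a) * Real.log (y t)) + a * Real.log (y t) := by ring
      have h3 : a * Real.log (y t) ≤ a * Real.log (y s0) :=
        mul_le_mul_of_nonneg_left (hlogY t ht) ha.le
      have h4 : Real.log (w t * y t) ≤ (Real.log (w s0) + (1-a) * Real.log (y s0))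
          + |c1| * (s0 - smr) + a * Real.log (y s0) := by
        rw [h1, h2]
        linarith [hz_ub t ht]
      calc w t * y t = Real.exp (Real.log (w t * y t)) :=
            (Real.exp_log (mul_pos hw0' hy0')).symm
        _ ≤ M2 := by rw [hM2_def]; exact Real.exp_le_exp.2 h4
    set c2 : ℝ := c1 + (1-a) * M2 / γ with hc2_def
    have hz_lb : ∀ t ∈ Ioc smr s0,
        (Real.log (w s0) + (1-a) * Real.log (y s0)) - |c2| * (s0 - smr) ≤
          Real.log (w t) + (1-a) * Real.log (y t) := by
      have hb := lks_bound_of_deriv_le (c := c2) hsmrlt hDdz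
        (fun t ht => by
          have h1 : (1-a) * (w t * y t) ≤ (1-a) * M2 :=
            mul_le_mul_of_nonneg_left (hwy_ub t ht) h1a
          have h2 : (1-a) * (w t * y t) / γ ≤ (1-a) * M2 / γ :=
            (div_le_div_iff_of_pos_right hγ).2 h1
          rw [hc2_def]
          linarith)
      intro t ht
      have h2 := hb t ht
      have h3 : -(|c2| * (s0 - smr)) ≤ -(c2 * (s0 - t)) := by
        have h4 : c2 ≤ |c2| := le_abs_self _
        have h5 : (0:ℝ) ≤ s0 - t := by linarith [ht.2]
        have h6 : s0 - t ≤ s0 - smr := by linarith [ht.1]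
        nlinarith [abs_nonneg c2, neg_abs_le c2]
      linarith
    -- conclude w → ∞
    set mz : ℝ := (Real.log (w s0) + (1-a) * Real.log (y s0)) - |c2| * (s0 - smr) with hmz_def
    have h1 : Tendsto (fun t => (a-1) * Real.log (y t)) (𝓝[>] smr) atTop :=
      Tendsto.const_mul_atBot_of_neg (by linarith : a - 1 < 0) hlogy_bot
    have h2 : Tendsto (fun t => mz + (a-1) * Real.log (y t)) (𝓝[>] smr) atTop :=
      tendsto_atTop_add_const_left _ mz h1
    have h3 : Tendsto (fun t => Real.exp (mz + (a-1) * Real.log (y t))) (𝓝[>] smr) atTop :=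
      Real.tendsto_exp_atTop.comp h2
    refine tendsto_atTop_mono' _ ?_ h3
    filter_upwards [hEvIoc2] with t ht
    have h4 := hz_lb t ht
    have h5 : mz + (a-1) * Real.log (y t) ≤ Real.log (w t) := by
      rw [hmz_def]
      linarith [h4]
    calc Real.exp (mz + (a-1) * Real.log (y t)) ≤ Real.exp (Real.log (w t)) :=
          Real.exp_le_exp.2 h5
      _ = w t := Real.exp_log (hDw t ht)
  -- case a = 1
  · intro h_a
    refine ⟨w s0 * Real.exp (σ * (s0 - smr)), mul_pos hws0 (Real.exp_pos _), ?_⟩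
    have hconst : ∀ t ∈ Ioc smr s0, w s0 * Real.exp (σ * s0) = w t * Real.exp (σ * t) := by
      intro t ht
      have hder : ∀ x ∈ Ico t s0, HasDerivWithinAt (fun z => w z * Real.exp (σ * z)) 0 (Ici x) x := by
        intro x hx
        have hxD : x ∈ Ioc smr s0 := ⟨lt_of_lt_of_le ht.1 hx.1, hx.2.le⟩
        have hde : HasDerivAt (fun z => Real.exp (σ * z)) (Real.exp (σ * x) * σ) x := by
          have := ((hasDerivAt_id x).const_mul σ).exp
          simpa using this
        have h := (hDdw x hxD).mul hde
        have : w x * ((a - 1) * v x - σ) * Real.exp (σ * x) + w x * (Real.exp (σ * x) * σ) = 0 := by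
          rw [h_a]; ring
        rw [this] at h
        exact h.hasDerivWithinAt
      have hcont : ContinuousOn (fun z => w z * Real.exp (σ * z)) (Icc t s0) := by
        intro x hx
        have hxD : x ∈ Ioc smr s0 := ⟨lt_of_lt_of_le ht.1 hx.1, hx.2⟩
        exact (((hDdw x hxD).continuousAt).mul
          (Real.continuous_exp.comp (continuous_const.mul continuous_id)).continuousAt).continuousWithinAt
      exact constant_of_has_deriv_right_zero hcont hder s0 ⟨ht.2, le_rfl⟩
    have hcont2 : Tendsto (fun t => w s0 * Real.exp (σ * (s0 - t))) (𝓝[>] smr)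
        (𝓝 (w s0 * Real.exp (σ * (s0 - smr)))) := by
      apply Tendsto.mono_left _ nhdsWithin_le_nhds
      exact Continuous.tendsto (continuous_const.mul (Real.continuous_exp.comp
        (continuous_const.mul (continuous_const.sub continuous_id)))) smr
    refine Tendsto.congr' ?_ hcont2
    filter_upwards [hEvIoc2] with t ht
    have h := hconst t ht
    have hexp : Real.exp (σ * t) ≠ 0 := (Real.exp_pos _).ne'
    rw [mul_sub, Real.exp_sub]
    field_simp
    linarith [h]
  -- case 1 < a
  · intro h_a
    have h1a : (0:ℝ) < a - 1 := by linarith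
    set c3 : ℝ := (a-1)*vs - σ with hc3_def
    have hlw_ub : ∀ t ∈ Ioc smr s0, Real.log (w t) ≤ Real.log (w s0) + |c3| * (s0 - smr) := by
      have hb := lks_bound_of_deriv_ge (c := c3) hsmrlt hDdlw
        (fun t ht => by
          have := mul_le_mul_of_nonneg_left (hDv t ht).le (by linarith : (0:ℝ) ≤ a - 1)
          rw [hc3_def]
          nlinarith)
      intro t ht
      have h2 := hb t ht
      have h4 : -c3 ≤ |c3| := neg_le_abs _
      have h5 : (0:ℝ) ≤ s0 - t := by linarith [ht.2]
      have h6 : s0 - t ≤ s0 - smr := by linarith [ht.1]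
      nlinarith [abs_nonneg c3]
    set Winf : ℝ := Real.exp (Real.log (w s0) + |c3| * (s0 - smr)) with hWinf_def
    have hwW : ∀ t ∈ Ioc smr s0, w t ≤ Winf := by
      intro t ht
      calc w t = Real.exp (Real.log (w t)) := (Real.exp_log (hDw t ht)).symm
        _ ≤ Winf := by rw [hWinf_def]; exact Real.exp_le_exp.2 (hlw_ub t ht)
    have hWinf0 : 0 ≤ Winf := by rw [hWinf_def]; exact (Real.exp_pos _).le
    set M3 : ℝ := Winf * y s0 with hM3_def
    have hwy_ub : ∀ t ∈ Ioc smr s0, w t * y t ≤ M3 := by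
      intro t ht
      rw [hM3_def]
      exact mul_le_mul (hwW t ht) (hyY t ht) (hDy t ht).le hWinf0
    set c4 : ℝ := ((1-a)*vs - σ) + (1-a) * M3 / γ with hc4_def
    have hz_ub2 : ∀ t ∈ Ioc smr s0,
        Real.log (w t) + (1-a) * Real.log (y t) ≤
          (Real.log (w s0) + (1-a) * Real.log (y s0)) + |c4| * (s0 - smr) := by
      have hb := lks_bound_of_deriv_ge (c := c4) hsmrlt hDdz
        (fun t ht => by
          have h1 : (1-a) * M3 ≤ (1-a) * (w t * y t) :=
            mul_le_mul_of_nonpos_left (hwy_ub t ht) (by linarith : 1 - a ≤ 0)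
          have h2 : (1-a) * M3 / γ ≤ (1-a) * (w t * y t) / γ :=
            (div_le_div_iff_of_pos_right hγ).2 h1
          rw [hc4_def]
          linarith)
      intro t ht
      have h2 := hb t ht
      have h4 : -c4 ≤ |c4| := neg_le_abs _
      have h5 : (0:ℝ) ≤ s0 - t := by linarith [ht.2]
      have h6 : s0 - t ≤ s0 - smr := by linarith [ht.1]
      nlinarith [abs_nonneg c4]
    set Mz2 : ℝ := (Real.log (w s0) + (1-a) * Real.log (y s0)) + |c4| * (s0 - smr) with hMz2_def
    have h1 : Tendsto (fun t => (a-1) * Real.log (y t)) (𝓝[>] smr) atBot :=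
      Tendsto.const_mul_atBot h1a hlogy_bot
    have h2 : Tendsto (fun t => Mz2 + (a-1) * Real.log (y t)) (𝓝[>] smr) atBot :=
      tendsto_atBot_add_const_left _ Mz2 h1
    have h3 : Tendsto (fun t => Real.exp (Mz2 + (a-1) * Real.log (y t))) (𝓝[>] smr) (𝓝 0) :=
      Real.tendsto_exp_atBot.comp h2
    refine tendsto_of_tendsto_of_tendsto_of_le_of_le' tendsto_const_nhds h3 ?_ ?_
    · filter_upwards [hEvIoc2] with t ht
      exact (hDw t ht).le
    · filter_upwards [hEvIoc2] with t ht
      have h4 := hz_ub2 t ht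
      have h5 : Real.log (w t) ≤ Mz2 + (a-1) * Real.log (y t) := by
        rw [hMz2_def]
        linarith
      calc w t = Real.exp (Real.log (w t)) := (Real.exp_log (hDw t ht)).symm
        _ ≤ _ := Real.exp_le_exp.2 h5

/-- For `a > 0`, `v₀ > v⋆`, `w₀ > 0`, any maximal solution of
(LKS) through `(w₀, v₀)` has a finite left endpoint `s₋`, `v → +∞` at `s₋⁺`, and
`w → +∞` (if `a < 1`), `w →` a finite positive limit (if `a = 1`), `w → 0`
(if `a > 1`) as `s → s₋⁺`. -/
theorem stmt4 (a σ γ lam : ℝ) (ha : 0 < a) (hσ : 0 < σ) (hγ : 0 < γ) (hlam : 0 < lam)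
    (v0 w0 s0 : ℝ) (hv0 : Real.sqrt (lam / γ) < v0) (hw0 : 0 < w0)
    (sm sp : EReal) (w v : ℝ → ℝ)
    (hsol : IsMaxLKSSol a σ γ lam sm sp w v)
    (hs0m : sm < (s0 : EReal)) (hs0p : (s0 : EReal) < sp)
    (hw : w s0 = w0) (hv : v s0 = v0) :
    ∃ smr : ℝ, sm = (smr : EReal) ∧
      Tendsto v (𝓝[>] smr) atTop ∧
      (a < 1 → Tendsto w (𝓝[>] smr) atTop) ∧
      (a = 1 → ∃ L : ℝ, 0 < L ∧ Tendsto w (𝓝[>] smr) (𝓝 L)) ∧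
      (1 < a → Tendsto w (𝓝[>] smr) (𝓝 0)) := by
  exact stmt4_main a σ γ lam ha hσ hγ hlam v0 w0 s0 hv0 hw0 sm sp w v
    hsol.1.1 hsol.1.2
    (fun tm tp w₁ v₁ h1 h2 h3 h4 h5 => hsol.2 tm tp w₁ v₁ h1 h2 h3 h4 h5)
    hs0m hs0p hw hv
end

section
/- Let a > 0, v₀ < −v_⋆, w₀ > 0 and s₀ ∈ ℝ, and let (w, v) be a maximal solution of (LKS) on (s_−, s_+) with w(s₀) = w₀, v(s₀) = v₀. Then s_+ is finite, v(s) → −∞ as s → s_+⁻, and as s → s_+⁻: w(s) → +∞ if a < 1; w(s) converges to a finite positive limit if a = 1; and w(s) → 0 if a > 1. -/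
open Set Filter Topology

/-- Pairwise monotonicity from nonneg derivative on a closed interval. -/
lemma monoHelp {f f' : ℝ → ℝ} {x y : ℝ} (hxy : x ≤ y)
    (hd : ∀ t ∈ Icc x y, HasDerivAt f (f' t) t)
    (h0 : ∀ t ∈ Icc x y, 0 ≤ f' t) : f x ≤ f y := by
  have := monotoneOn_of_deriv_nonneg (convex_Icc x y)
    (fun t ht => (hd t ht).continuousAt.continuousWithinAt)
    (fun t ht => ((hd t (interior_subset ht)).differentiableAt).differentiableWithinAt)
    (fun t ht => by
      rw [(hd t (interior_subset ht)).deriv]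
      exact h0 t (interior_subset ht))
  exact this (left_mem_Icc.2 hxy) (right_mem_Icc.2 hxy) hxy

lemma antiHelp {f f' : ℝ → ℝ} {x y : ℝ} (hxy : x ≤ y)
    (hd : ∀ t ∈ Icc x y, HasDerivAt f (f' t) t)
    (h0 : ∀ t ∈ Icc x y, f' t ≤ 0) : f y ≤ f x := by
  have := monoHelp (f := fun s => -f s) (f' := fun s => -f' s) hxy
    (fun t ht => (hd t ht).neg) (fun t ht => neg_nonneg.2 (h0 t ht))
  exact le_of_neg_le_neg (by simpa using this)

/-- A function monotone on `Ico t b` and bounded above there has a limit at `b⁻`. -/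
lemma tendsto_mono_Ico {f : ℝ → ℝ} {t b : ℝ} (htb : t < b)
    (hm : MonotoneOn f (Ico t b)) (hbd : BddAbove (f '' Ico t b)) :
    ∃ l, Tendsto f (𝓝[<] b) (𝓝 l) := by
  set g : ℝ → ℝ := fun s => f (max s t) with hg
  have hmem : ∀ s ∈ Iio b, max s t ∈ Ico t b := fun s hs =>
    ⟨le_max_right _ _, max_lt hs htb⟩
  have hgm : MonotoneOn g (Iio b) := fun s hs s' hs' hss' =>
    hm (hmem s hs) (hmem s' hs') (max_le_max hss' le_rfl)
  have hgbd : BddAbove (g '' Iio b) := by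
    obtain ⟨B, hB⟩ := hbd
    exact ⟨B, fun z ⟨s, hs, hz⟩ => hz ▸ hB (mem_image_of_mem f (hmem s hs))⟩
  refine ⟨sSup (g '' Iio b), (hgm.tendsto_nhdsLT hgbd).congr' ?_⟩
  filter_upwards [Ioo_mem_nhdsLT_of_mem (show b ∈ Ioc t b from ⟨htb, le_rfl⟩)] with s hs
  simp [hg, max_eq_left hs.1.le]

lemma tendsto_mono_Ico_atTop {f : ℝ → ℝ} {t b : ℝ}
    (hm : MonotoneOn f (Ico t b)) (hbd : ¬ BddAbove (f '' Ico t b)) :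
    Tendsto f (𝓝[<] b) atTop := by
  rw [tendsto_atTop]
  intro B
  obtain ⟨z, ⟨x, hx, hz⟩, hBz⟩ := not_bddAbove_iff.1 hbd B
  filter_upwards [Ioo_mem_nhdsLT_of_mem (show b ∈ Ioc x b from ⟨hx.2, le_rfl⟩)] with s hs
  calc B ≤ z := hBz.le
    _ = f x := hz.symm
    _ ≤ f s := hm hx ⟨hx.1.trans hs.1.le, hs.2⟩ hs.1.le


/-- If `f` solves an ODE-like equation on `[a,b)`, is continuous at `b⁻` and its
derivative converges at `b⁻`, then `f` has that one-sided derivative at `b`. -/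
lemma hasDerivWithinAt_endpoint {E : Type*} [NormedAddCommGroup E] [NormedSpace ℝ E]
    {f : ℝ → E} {f' : ℝ → E} {a b : ℝ} (hab : a < b) {L : E}
    (hd : ∀ t ∈ Ico a b, HasDerivAt f (f' t) t)
    (hcont : Tendsto f (𝓝[<] b) (𝓝 (f b)))
    (hlim : Tendsto f' (𝓝[<] b) (𝓝 L)) :
    HasDerivWithinAt f L (Iic b) b := by
  rw [hasDerivWithinAt_iff_tendsto_slope]
  have hIic : Iic b \ {b} = Iio b := by ext z; simp [lt_iff_le_and_ne]
  rw [hIic]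
  rw [Metric.tendsto_nhds]
  intro ε hε
  have hev : ∀ᶠ u in 𝓝[<] b, ‖f' u - L‖ < ε / 2 := by
    have := hlim.eventually (Metric.ball_mem_nhds L (by positivity : (0:ℝ) < ε / 2))
    filter_upwards [this] with u hu
    simpa [dist_eq_norm] using hu
  obtain ⟨l, hl, hsub⟩ := mem_nhdsLT_iff_exists_Ioo_subset.1 hev
  set x := max l a with hx
  have hxb : x < b := max_lt hl hab
  have hbound : ∀ u ∈ Ioo x b, ‖f' u - L‖ ≤ ε / 2 := fun u hu =>
    (hsub ⟨lt_of_le_of_lt (le_max_left l a) hu.1, hu.2⟩).le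
  have key : ∀ t ∈ Ioo x b, ‖f b - f t - (b - t) • L‖ ≤ ε / 2 * (b - t) := by
    intro t ht
    set g : ℝ → E := fun u => f u - u • L with hgdef
    have hg : ∀ s ∈ Ico t b, ∀ u ∈ Icc t s, HasDerivWithinAt g (f' u - L) (Icc t s) u := by
      intro s hs u hu
      have hu' : u ∈ Ico a b := ⟨le_trans (le_max_right l a) (le_trans ht.1.le hu.1),
        lt_of_le_of_lt hu.2 hs.2⟩
      exact (((hd u hu').sub ((hasDerivAt_id u).smul_const L)).congr_deriv
        (by rw [one_smul])).hasDerivWithinAt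
    have hgs : ∀ s ∈ Ico t b, ‖g s - g t‖ ≤ ε / 2 * (s - t) := by
      intro s hs
      have := Convex.norm_image_sub_le_of_norm_hasDerivWithin_le
        (f := g) (f' := fun u => f' u - L) (s := Icc t s) (C := ε / 2)
        (fun u hu => hg s hs u hu)
        (fun u hu => hbound u ⟨lt_of_lt_of_le ht.1 hu.1, lt_of_le_of_lt hu.2 hs.2⟩)
        (convex_Icc t s) (left_mem_Icc.2 hs.1) (right_mem_Icc.2 hs.1)
      calc ‖g s - g t‖ ≤ ε / 2 * ‖s - t‖ := this
        _ = ε / 2 * (s - t) := by rw [Real.norm_eq_abs, abs_of_nonneg (by linarith [hs.1])]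
    -- pass to the limit s → b⁻
    have h1 : Tendsto (fun s => ‖g s - g t‖) (𝓝[<] b) (𝓝 ‖(f b - b • L) - g t‖) := by
      have : Tendsto g (𝓝[<] b) (𝓝 (f b - b • L)) :=
        hcont.sub ((continuous_id.smul continuous_const).tendsto b |>.mono_left
          nhdsWithin_le_nhds)
      exact (this.sub_const (g t)).norm
    have h2 : ∀ᶠ s in 𝓝[<] b, ‖g s - g t‖ ≤ ε / 2 * (b - t) := by
      filter_upwards [Ioo_mem_nhdsLT_of_mem (show b ∈ Ioc t b from ⟨ht.2, le_rfl⟩)] with s hs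
      calc ‖g s - g t‖ ≤ ε / 2 * (s - t) := hgs s ⟨hs.1.le, hs.2⟩
        _ ≤ ε / 2 * (b - t) := by nlinarith [hs.2, hε]
    have h3 := le_of_tendsto h1 h2
    calc ‖f b - f t - (b - t) • L‖ = ‖(f b - b • L) - g t‖ := by
          rw [hgdef]; congr 1; simp [sub_smul]; abel
      _ ≤ ε / 2 * (b - t) := h3
  filter_upwards [Ioo_mem_nhdsLT_of_mem (show b ∈ Ioc x b from ⟨hxb, le_rfl⟩)] with t ht
  have hbt : 0 < b - t := by linarith [ht.2]
  have e1 : slope f b t = (b - t)⁻¹ • (f b - f t) := by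
    rw [slope_def_module, show t - b = -(b-t) by ring, inv_neg, neg_smul, ← smul_neg, neg_sub]
  have : slope f b t - L = (b - t)⁻¹ • (f b - f t - (b - t) • L) := by
    rw [e1]
    conv_rhs => rw [smul_sub, smul_smul, inv_mul_cancel₀ hbt.ne', one_smul]
  rw [dist_eq_norm, this, norm_smul, norm_inv, Real.norm_eq_abs, abs_of_pos hbt]
  calc (b - t)⁻¹ * ‖f b - f t - (b - t) • L‖ ≤ (b - t)⁻¹ * (ε / 2 * (b - t)) := by
        apply mul_le_mul_of_nonneg_left (key t ht) (by positivity)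
    _ = ε / 2 := by field_simp
    _ < ε := by linarith


set_option maxHeartbeats 1000000 in
/-- For `a > 0`, `v₀ < −v⋆`, `w₀ > 0`, any maximal solution of
(LKS) through `(w₀, v₀)` has a finite right endpoint `s₊`, `v → −∞` at `s₊⁻`, and
`w → +∞` (if `a < 1`), `w →` a finite positive limit (if `a = 1`), `w → 0`
(if `a > 1`) as `s → s₊⁻`. -/
theorem stmt5 (a σ γ lam : ℝ) (ha : 0 < a) (hσ : 0 < σ) (hγ : 0 < γ) (hlam : 0 < lam)
    (v0 w0 s0 : ℝ) (hv0 : v0 < -Real.sqrt (lam / γ)) (hw0 : 0 < w0)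
    (sm sp : EReal) (w v : ℝ → ℝ)
    (hsol : IsMaxLKSSol a σ γ lam sm sp w v)
    (hs0m : sm < (s0 : EReal)) (hs0p : (s0 : EReal) < sp)
    (hw : w s0 = w0) (hv : v s0 = v0) :
    ∃ spr : ℝ, sp = (spr : EReal) ∧
      Tendsto v (𝓝[<] spr) atBot ∧
      (a < 1 → Tendsto w (𝓝[<] spr) atTop) ∧
      (a = 1 → ∃ L : ℝ, 0 < L ∧ Tendsto w (𝓝[<] spr) (𝓝 L)) ∧
      (1 < a → Tendsto w (𝓝[<] spr) (𝓝 0)) := by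
  obtain ⟨⟨hsmsp, hODE⟩, hmax⟩ := hsol
  have hlg : (0:ℝ) < lam / γ := by positivity
  have hvstar2 : Real.sqrt (lam / γ) ^ 2 = lam / γ := Real.sq_sqrt hlg.le
  have hvstar0 : 0 < Real.sqrt (lam / γ) := Real.sqrt_pos.2 hlg
  have hv0neg : v0 < 0 := by linarith
  have hv0sq : lam / γ < v0 ^ 2 := by nlinarith
  have hv0sq0 : (0:ℝ) < v0 ^ 2 := by nlinarith
  set c := 1 - lam / γ / v0 ^ 2 with hc
  have hc0 : 0 < c := by rw [hc, sub_pos, div_lt_one hv0sq0]; exact hv0sq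
  clear_value c
  have hc1 : c < 1 := by
    have : 0 < lam / γ / v0 ^ 2 := by positivity
    rw [hc]; linarith
  have hsm_lt : ∀ s : ℝ, s0 ≤ s → sm < (s : EReal) :=
    fun s hs => lt_of_lt_of_le hs0m (by exact_mod_cast hs)
  have hfact : ∀ s : ℝ, s0 ≤ s → (s : EReal) < sp →
      0 < w s ∧ HasDerivAt w (w s * ((a - 1) * v s - σ)) s ∧
        HasDerivAt v (lam / γ - v s ^ 2 - w s / γ) s :=
    fun s h1 h2 => hODE s (hsm_lt s h1) h2
  -- Step 1 : invariance `v ≤ v0` to the right of `s0`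
  have hinv : ∀ s : ℝ, s0 ≤ s → (s : EReal) < sp → v s ≤ v0 := by
    intro s1 hs1 hs1p
    by_contra hgt
    push_neg at hgt
    have hords : ∀ t ∈ Icc s0 s1, (t : EReal) < sp := fun t ht =>
      lt_of_le_of_lt (by exact_mod_cast ht.2) hs1p
    set B := {z ∈ Icc s0 s1 | v0 < v z} with hB
    have hs1B : s1 ∈ B := ⟨⟨hs1, le_rfl⟩, hgt⟩
    have hBne : B.Nonempty := ⟨s1, hs1B⟩
    have hBbd : BddBelow B := ⟨s0, fun z hz => hz.1.1⟩
    set t1 := sInf B with ht1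
    have ht1mem : t1 ∈ Icc s0 s1 :=
      ⟨le_csInf hBne fun z hz => hz.1.1, csInf_le hBbd hs1B⟩
    have ht1sp : (t1 : EReal) < sp := hords t1 ht1mem
    have hle : v t1 ≤ v0 := by
      rcases eq_or_lt_of_le ht1mem.1 with heq | hlt
      · rw [← heq, hv]
      · have hct : ContinuousAt v t1 := (hfact t1 ht1mem.1 ht1sp).2.2.continuousAt
        have htd : Tendsto v (𝓝[<] t1) (𝓝 (v t1)) := hct.tendsto.mono_left nhdsWithin_le_nhds
        refine le_of_tendsto htd ?_
        filter_upwards [Ioo_mem_nhdsLT_of_mem (show t1 ∈ Ioc s0 t1 from ⟨hlt, le_rfl⟩)]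
          with z hz
        by_contra hzgt
        push_neg at hzgt
        have hzB : z ∈ B := ⟨⟨hz.1.le, hz.2.le.trans ht1mem.2⟩, hzgt⟩
        exact absurd (csInf_le hBbd hzB) (not_le.2 hz.2)
    obtain ⟨hwt1, hdw1, hdv1⟩ := hfact t1 ht1mem.1 ht1sp
    have hder_neg : lam / γ - v t1 ^ 2 - w t1 / γ < 0 := by
      have h1 : 0 < w t1 / γ := by positivity
      nlinarith
    have hsl := hasDerivAt_iff_tendsto_slope.1 hdv1
    have hev : ∀ᶠ z in 𝓝[≠] t1, slope v t1 z < 0 := hsl.eventually (Iio_mem_nhds hder_neg)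
    rw [eventually_nhdsWithin_iff] at hev
    obtain ⟨ε, hε, hball⟩ := Metric.eventually_nhds_iff.1 hev
    obtain ⟨z, hzB, hzlt⟩ := exists_lt_of_csInf_lt hBne (lt_add_of_pos_right t1 hε)
    have hz1 : t1 ≤ z := csInf_le hBbd hzB
    have hzne : z ≠ t1 := by
      intro h; rw [h] at hzB; exact absurd hle (not_le.2 hzB.2)
    have hzslope : slope v t1 z < 0 := by
      apply hball _ (mem_compl_singleton_iff.2 hzne)
      rw [Real.dist_eq, abs_of_nonneg (by linarith)]
      linarith
    rw [slope_def_field] at hzslope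
    have hzgt : t1 < z := lt_of_le_of_ne hz1 (Ne.symm hzne)
    have : 0 < (v z - v t1) / (z - t1) :=
      div_pos (by linarith [hzB.2]) (by linarith)
    linarith
  have hvneg : ∀ s : ℝ, s0 ≤ s → (s : EReal) < sp → v s < 0 :=
    fun s h1 h2 => lt_of_le_of_lt (hinv s h1 h2) hv0neg
  -- Step 2 : slope estimate for 1/v
  have hslope2 : ∀ t s : ℝ, s0 ≤ t → t ≤ s → (s : EReal) < sp →
      c * (s - t) ≤ (v s)⁻¹ - (v t)⁻¹ := by
    intro t s h0t hts hssp
    have hords : ∀ z ∈ Icc t s, (z : EReal) < sp := fun z hz =>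
      lt_of_le_of_lt (by exact_mod_cast hz.2) hssp
    have key := monoHelp (f := fun z => (v z)⁻¹ - c * z)
      (f' := fun z => -(lam / γ - v z ^ 2 - w z / γ) / (v z) ^ 2 - c) hts
      (fun z hz => by
        have h1 := (hfact z (h0t.trans hz.1) (hords z hz)).2.2
        have h2 := hvneg z (h0t.trans hz.1) (hords z hz)
        exact (h1.inv h2.ne).sub (by simpa using (hasDerivAt_id z).const_mul c))
      (fun z hz => by
        have hzs0 : s0 ≤ z := h0t.trans hz.1
        have h2 := hvneg z hzs0 (hords z hz)
        have h3 := hinv z hzs0 (hords z hz)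
        have h4 := (hfact z hzs0 (hords z hz)).1
        have h5 : (0:ℝ) < (v z) ^ 2 := by nlinarith
        rw [sub_nonneg, le_div_iff₀ h5]
        have h6 : v0 ^ 2 ≤ v z ^ 2 := by nlinarith
        have h7 : lam / γ = (1 - c) * v0 ^ 2 := by
          rw [hc, sub_sub_cancel, div_mul_cancel₀ _ hv0sq0.ne']
        have h8 : 0 < w z / γ := by positivity
        nlinarith)
    linarith
  -- Step 3 : `sp` is finite
  have hbd : sp ≤ ((s0 - 1 / (c * v0) : ℝ) : EReal) := by
    by_contra hnot
    push_neg at hnot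
    obtain ⟨x, hx1, hx2⟩ := exists_between hnot
    have hxt : x ≠ ⊤ := ne_top_of_lt hx2
    have hxb : x ≠ ⊥ := ne_bot_of_gt hx1
    set r := x.toReal with hr
    have hxr : (r : EReal) = x := EReal.coe_toReal hxt hxb
    have hr1 : s0 - 1 / (c * v0) < r := by rw [← hxr] at hx1; exact_mod_cast hx1
    have hcv : 1 / (c * v0) < 0 :=
      div_neg_of_pos_of_neg one_pos (mul_neg_of_pos_of_neg hc0 hv0neg)
    have hs0r : s0 ≤ r := by linarith
    have hr2 : (r : EReal) < sp := by rw [← hxr] at hx2; exact hx2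
    have hsl := hslope2 s0 r le_rfl hs0r hr2
    rw [hv] at hsl
    have hvr : v r < 0 := hvneg r hs0r hr2
    have hvri : (v r)⁻¹ < 0 := inv_neg''.2 hvr
    have hv0i : v0⁻¹ < 0 := inv_neg''.2 hv0neg
    have hkey : c * (r - s0) < -v0⁻¹ := by linarith
    have hcv2 : c * (1 / (c * v0)) = v0⁻¹ := by
      rw [mul_one_div, ← div_div, div_self hc0.ne', one_div]
    have h10 : c * (-(1 / (c * v0))) < c * (r - s0) :=
      mul_lt_mul_of_pos_left (by linarith) hc0
    rw [mul_neg, hcv2] at h10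
    linarith
  have hsp_ne_top : sp ≠ ⊤ := ne_top_of_le_ne_top (EReal.coe_ne_top _) hbd
  have hsp_ne_bot : sp ≠ ⊥ := ne_bot_of_gt hs0p
  set spr := sp.toReal with hsprdef
  have hspr : sp = (spr : EReal) := (EReal.coe_toReal hsp_ne_top hsp_ne_bot).symm
  have hs0spr : s0 < spr := by rw [hspr] at hs0p; exact_mod_cast hs0p
  clear_value spr
  have hfact' : ∀ s : ℝ, s0 ≤ s → s < spr →
      0 < w s ∧ HasDerivAt w (w s * ((a - 1) * v s - σ)) s ∧
        HasDerivAt v (lam / γ - v s ^ 2 - w s / γ) s :=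
    fun s h1 h2 => hfact s h1 (by rw [hspr]; exact_mod_cast h2)
  have hinv' : ∀ s : ℝ, s0 ≤ s → s < spr → v s ≤ v0 :=
    fun s h1 h2 => hinv s h1 (by rw [hspr]; exact_mod_cast h2)
  have hvneg' : ∀ s : ℝ, s0 ≤ s → s < spr → v s < 0 :=
    fun s h1 h2 => lt_of_le_of_lt (hinv' s h1 h2) hv0neg
  have hslope2' : ∀ t s : ℝ, s0 ≤ t → t ≤ s → s < spr → c * (s - t) ≤ (v s)⁻¹ - (v t)⁻¹ :=
    fun t s h1 h2 h3 => hslope2 t s h1 h2 (by rw [hspr]; exact_mod_cast h3)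
  have hmono : ∀ t s : ℝ, s0 ≤ t → t ≤ s → s < spr → v s ≤ v t := by
    intro t s h1 h2 h3
    have hsl := hslope2' t s h1 h2 h3
    have hvt := hvneg' t h1 (lt_of_le_of_lt h2 h3)
    have hvs := hvneg' s (h1.trans h2) h3
    have h4 : (v t)⁻¹ ≤ (v s)⁻¹ := by
      have h5 : 0 ≤ c * (s - t) := mul_nonneg hc0.le (sub_nonneg.2 h2)
      linarith
    have h7 : (0:ℝ) < v t * v s := mul_pos_of_neg_of_neg hvt hvs
    have h8 : 0 ≤ ((v s)⁻¹ - (v t)⁻¹) * (v t * v s) := mul_nonneg (by linarith) h7.le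
    have e1 : (v s)⁻¹ * (v t * v s) = v t := by
      rw [mul_comm (v t) (v s), ← mul_assoc, inv_mul_cancel₀ hvs.ne, one_mul]
    have e2 : (v t)⁻¹ * (v t * v s) = v s := by
      rw [← mul_assoc, inv_mul_cancel₀ hvt.ne, one_mul]
    rw [sub_mul, e1, e2] at h8
    linarith
  set u : ℝ → ℝ := fun z => Real.log (w z) with hu
  have hud : ∀ s : ℝ, s0 ≤ s → s < spr → HasDerivAt u ((a - 1) * v s - σ) s := by
    intro s h1 h2
    obtain ⟨hw1, hw2, -⟩ := hfact' s h1 h2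
    have h3 := hw2.log hw1.ne'
    rwa [mul_div_cancel_left₀ _ hw1.ne'] at h3
  have hweq : ∀ s : ℝ, s0 ≤ s → s < spr → w s = Real.exp (u s) :=
    fun s h1 h2 => (Real.exp_log (hfact' s h1 h2).1).symm
  have hIoo : ∀ t : ℝ, t < spr → Ioo t spr ∈ 𝓝[<] spr :=
    fun t ht => Ioo_mem_nhdsLT_of_mem ⟨ht, le_rfl⟩
  -- blow-up of `v`
  have hvbot : Tendsto v (𝓝[<] spr) atBot := by
    by_cases hbb : BddBelow (v '' Ico s0 spr)
    case neg =>
      rw [tendsto_atBot]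
      intro B
      obtain ⟨z, ⟨x, hx, hz⟩, hzB⟩ := not_bddBelow_iff.1 hbb B
      filter_upwards [hIoo x hx.2] with s hs
      exact le_of_lt (lt_of_le_of_lt (hmono x s hx.1 hs.1.le hs.2) (hz ▸ hzB))
    case pos =>
    exfalso
    obtain ⟨Lb0, hLb0⟩ := hbb
    set Lb := min Lb0 v0 with hLbdef
    have hLbv : ∀ s, s0 ≤ s → s < spr → Lb ≤ v s ∧ v s ≤ v0 := fun s h1 h2 =>
      ⟨le_trans (min_le_left _ _) (hLb0 (mem_image_of_mem v ⟨h1, h2⟩)), hinv' s h1 h2⟩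
    set M := |a - 1| * (|Lb| + |v0|) + σ with hMdef
    have hM0 : 0 ≤ M := by positivity
    have hubd : ∀ s, s0 ≤ s → s < spr → |u s - u s0| ≤ M * (spr - s0) := by
      intro s h1 h2
      have hmvt := Convex.norm_image_sub_le_of_norm_hasDerivWithin_le
        (f := u) (f' := fun z => (a - 1) * v z - σ) (s := Icc s0 s) (C := M)
        (fun z hz => (hud z hz.1 (lt_of_le_of_lt hz.2 h2)).hasDerivWithinAt)
        (fun z hz => by
          have h3 := hLbv z hz.1 (lt_of_le_of_lt hz.2 h2)
          rw [Real.norm_eq_abs]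
          have h4 : |v z| ≤ |Lb| + |v0| := by
            rw [abs_le]
            constructor
            · linarith [neg_abs_le Lb, h3.1, abs_nonneg v0]
            · linarith [le_abs_self v0, h3.2, abs_nonneg Lb]
          have h5 : |(a - 1) * v z - σ| ≤ |(a - 1) * v z| + |σ| := by
            have := abs_sub_le ((a - 1) * v z) 0 σ
            simpa using this
          rw [abs_mul] at h5
          have h6 : |a - 1| * |v z| ≤ |a - 1| * (|Lb| + |v0|) :=
            mul_le_mul_of_nonneg_left h4 (abs_nonneg _)
          rw [hMdef]
          rw [abs_of_pos hσ] at h5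
          linarith)
        (convex_Icc s0 s) (left_mem_Icc.2 h1) (right_mem_Icc.2 h1)
      rw [Real.norm_eq_abs, Real.norm_eq_abs] at hmvt
      calc |u s - u s0| ≤ M * |s - s0| := hmvt
        _ ≤ M * (spr - s0) := by
            apply mul_le_mul_of_nonneg_left _ hM0
            rw [abs_of_nonneg (by linarith)]
            linarith
    set ρ := Real.exp (u s0 - M * (spr - s0)) with hρdef
    set Wb := Real.exp (u s0 + M * (spr - s0)) with hWbdef
    have hρpos : 0 < ρ := Real.exp_pos _
    have hwrange : ∀ s, s0 ≤ s → s < spr → ρ ≤ w s ∧ w s ≤ Wb := by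
      intro s h1 h2
      have h3 := hubd s h1 h2
      rw [abs_le] at h3
      rw [hweq s h1 h2, hρdef, hWbdef]
      exact ⟨Real.exp_le_exp.2 (by linarith), Real.exp_le_exp.2 (by linarith)⟩
    -- limit of v
    have hvanti : MonotoneOn (fun s => -v s) (Ico s0 spr) := fun x hx y hy hxy => by
      simp only
      linarith [hmono x y hx.1 hxy hy.2]
    obtain ⟨nl, hnl⟩ := tendsto_mono_Ico hs0spr hvanti
      ⟨-Lb, by
        rintro z ⟨x, hx, rfl⟩
        simp only
        linarith [(hLbv x hx.1 hx.2).1]⟩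
    have hVt : Tendsto v (𝓝[<] spr) (𝓝 (-nl)) := by
      have h1 := hnl.neg
      refine h1.congr fun z => by simp
    set V := -nl with hVdef
    -- limit of u
    have hulim : ∃ l, Tendsto u (𝓝[<] spr) (𝓝 l) := by
      have hboth : ∃ t7, s0 ≤ t7 ∧ t7 < spr ∧
          (MonotoneOn u (Ico t7 spr) ∨ AntitoneOn u (Ico t7 spr)) := by
        rcases le_or_gt a 1 with hle | hgt
        · by_cases hex : ∃ t', (s0 ≤ t' ∧ t' < spr) ∧ 0 ≤ (a - 1) * v t' - σ
          · obtain ⟨t', ht', h0⟩ := hex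
            refine ⟨t', ht'.1, ht'.2, Or.inl ?_⟩
            intro x hx y hy hxy
            refine monoHelp hxy
              (fun z hz => hud z (ht'.1.trans (hx.1.trans hz.1)) (lt_of_le_of_lt hz.2 hy.2))
              (fun z hz => ?_)
            have h6 := hmono t' z ht'.1 (hx.1.trans hz.1) (lt_of_le_of_lt hz.2 hy.2)
            have h7 := mul_le_mul_of_nonpos_left h6 (by linarith : a - 1 ≤ 0)
            linarith
          · push_neg at hex
            refine ⟨s0, le_rfl, hs0spr, Or.inr ?_⟩
            intro x hx y hy hxy
            refine antiHelp hxy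
              (fun z hz => hud z (hx.1.trans hz.1) (lt_of_le_of_lt hz.2 hy.2))
              (fun z hz => ?_)
            exact (hex z ⟨hx.1.trans hz.1, lt_of_le_of_lt hz.2 hy.2⟩).le
        · by_cases hex : ∃ t', (s0 ≤ t' ∧ t' < spr) ∧ (a - 1) * v t' - σ < 0
          · obtain ⟨t', ht', h0⟩ := hex
            refine ⟨t', ht'.1, ht'.2, Or.inr ?_⟩
            intro x hx y hy hxy
            refine antiHelp hxy
              (fun z hz => hud z (ht'.1.trans (hx.1.trans hz.1)) (lt_of_le_of_lt hz.2 hy.2))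
              (fun z hz => ?_)
            have h6 := hmono t' z ht'.1 (hx.1.trans hz.1) (lt_of_le_of_lt hz.2 hy.2)
            have h7 := mul_le_mul_of_nonneg_left h6 (by linarith : 0 ≤ a - 1)
            linarith
          · push_neg at hex
            refine ⟨s0, le_rfl, hs0spr, Or.inl ?_⟩
            intro x hx y hy hxy
            refine monoHelp hxy
              (fun z hz => hud z (hx.1.trans hz.1) (lt_of_le_of_lt hz.2 hy.2))
              (fun z hz => hex z ⟨hx.1.trans hz.1, lt_of_le_of_lt hz.2 hy.2⟩)
      obtain ⟨t7, ht7a, ht7b, hcase⟩ := hboth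
      have hbdd2 : ∀ x, x ∈ Ico t7 spr →
          u s0 - M * (spr - s0) ≤ u x ∧ u x ≤ u s0 + M * (spr - s0) := by
        intro x hx
        have := hubd x (ht7a.trans hx.1) hx.2
        rw [abs_le] at this
        constructor <;> linarith [this.1, this.2]
      rcases hcase with hmon | hant
      · exact tendsto_mono_Ico ht7b hmon
          ⟨u s0 + M * (spr - s0), by rintro z ⟨x, hx, rfl⟩; exact (hbdd2 x hx).2⟩
      · obtain ⟨l, hl⟩ := tendsto_mono_Ico (f := fun s => -u s) ht7b
          (fun x hx y hy hxy => by simp only; linarith [hant hx hy hxy])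
          ⟨-(u s0 - M * (spr - s0)), by
            rintro z ⟨x, hx, rfl⟩
            simp only
            linarith [(hbdd2 x hx).1]⟩
        refine ⟨-l, ?_⟩
        have h1 := hl.neg
        refine h1.congr fun z => by simp

    obtain ⟨ℓ, hℓ⟩ := hulim
    set W := Real.exp ℓ with hWdef
    have hWt : Tendsto w (𝓝[<] spr) (𝓝 W) := by
      have h1 := (Real.continuous_exp.tendsto ℓ).comp hℓ
      refine h1.congr' ?_
      filter_upwards [hIoo s0 hs0spr] with z hz
      simp only [Function.comp]
      exact (hweq z hz.1.le hz.2).symm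
    have hWρ : ρ ≤ W := by
      refine ge_of_tendsto hWt ?_
      filter_upwards [hIoo s0 hs0spr] with z hz
      exact (hwrange z hz.1.le hz.2).1
    have hWpos : 0 < W := lt_of_lt_of_le hρpos hWρ
    set F : ℝ × ℝ → ℝ × ℝ :=
      fun p => (p.1 * ((a - 1) * p.2 - σ), lam / γ - p.2 ^ 2 - p.1 / γ) with hFdef
    have hFc : ContDiff ℝ 1 F := by
      apply ContDiff.prodMk
      · fun_prop
      · exact (contDiff_const.sub (contDiff_snd.pow 2)).sub (contDiff_fst.div_const γ)
    have hPt : Tendsto (fun s => (w s, v s)) (𝓝[<] spr) (𝓝 (W, V)) := hWt.prodMk_nhds hVt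
    obtain ⟨y, hy0, ε, hε, hy⟩ :=
      ContDiffAt.exists_forall_mem_closedBall_exists_eq_forall_mem_Ioo_hasDerivAt₀ (hFc.contDiffAt (x := (W, V))) spr
    obtain ⟨Kl, sL, hsL, hlip⟩ := (hFc.contDiffAt (x := (W, V))).exists_lipschitzOnWith
    obtain ⟨r, hr, hrsub⟩ := Metric.mem_nhds_iff.1 hsL
    set Pbar : ℝ → ℝ × ℝ := fun s => if s < spr then (w s, v s) else (W, V) with hPbardef
    have hPbar_spr : Pbar spr = (W, V) := if_neg (lt_irrefl spr)
    have hPbar_eq : ∀ s, s < spr → Pbar s = (w s, v s) := fun s hs => if_pos hs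
    have hPbar_t : Tendsto Pbar (𝓝[<] spr) (𝓝 (W, V)) := by
      refine hPt.congr' ?_
      filter_upwards [self_mem_nhdsWithin] with z hz
      exact (hPbar_eq z hz).symm
    have hycont : ContinuousAt y spr := (hy spr ⟨by linarith, by linarith⟩).continuousAt
    have hev1 : ∀ᶠ z in 𝓝[<] spr, Pbar z ∈ Metric.ball (W, V) r :=
      hPbar_t.eventually (Metric.ball_mem_nhds _ hr)
    have hev2 : ∀ᶠ z in 𝓝[<] spr, y z ∈ Metric.ball (W, V) r := by
      have h1 : Tendsto y (𝓝 spr) (𝓝 (W, V)) := hy0 ▸ hycont.tendsto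
      exact (h1.eventually (Metric.ball_mem_nhds _ hr)).filter_mono nhdsWithin_le_nhds
    obtain ⟨l2, hl2, hsub2⟩ := mem_nhdsLT_iff_exists_Ioo_subset.1 (hev1.and hev2)
    rw [mem_Iio] at hl2
    set t2 := max (max s0 (spr - ε / 2)) ((l2 + spr) / 2) with ht2def
    have ht2spr : t2 < spr := by
      rw [ht2def]
      apply max_lt (max_lt hs0spr (by linarith))
      linarith
    have ht2s0 : s0 ≤ t2 := le_trans (le_max_left _ _) (le_max_left _ _)
    have ht2eps : spr - ε / 2 ≤ t2 := le_trans (le_max_right _ _) (le_max_left _ _)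
    have ht2l2 : l2 < t2 := lt_of_lt_of_le (by linarith) (le_max_right _ _)
    have hball2 : ∀ z, t2 < z → z < spr →
        Pbar z ∈ Metric.ball (W, V) r ∧ y z ∈ Metric.ball (W, V) r :=
      fun z h1 h2 => hsub2 ⟨lt_trans ht2l2 h1, h2⟩
    have hPd : ∀ t, t2 ≤ t → t < spr → HasDerivAt Pbar (F (Pbar t)) t := by
      intro t h1 h2
      have hts0 : s0 ≤ t := ht2s0.trans h1
      obtain ⟨hp, hdw, hdv⟩ := hfact' t hts0 h2
      have hraw : HasDerivAt (fun z => (w z, v z)) (F (w t, v t)) t := by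
        rw [hFdef]
        exact hdw.prodMk hdv
      have heq : Pbar =ᶠ[𝓝 t] fun z => (w z, v z) := by
        filter_upwards [Iio_mem_nhds h2] with z hz
        exact hPbar_eq z hz
      have h3 := hraw.congr_of_eventuallyEq heq
      rwa [hPbar_eq t h2]
    have hPend : HasDerivWithinAt Pbar (F (W, V)) (Iic spr) spr := by
      refine hasDerivWithinAt_endpoint (f' := fun t => F (Pbar t)) ht2spr
        (fun t ht => hPd t ht.1 ht.2) ?_ ?_
      · rwa [hPbar_spr]
      · exact (hFc.continuous.tendsto (W, V)).comp hPbar_t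
    have huniq : EqOn Pbar y (Icc t2 spr) := by
      refine ODE_solution_unique_of_mem_Icc_left (v := fun _ p => F p) (s := fun _ => sL)
        (fun _ _ => hlip) ?_ ?_ ?_ ?_ ?_ ?_ ?_
      · intro t ht
        rcases lt_or_eq_of_le ht.2 with h2 | h2
        · exact (hPd t ht.1 h2).continuousAt.continuousWithinAt
        · subst h2
          exact hPend.continuousWithinAt.mono Icc_subset_Iic_self
      · intro t ht
        rcases lt_or_eq_of_le ht.2 with h2 | h2
        · exact (hPd t ht.1.le h2).hasDerivWithinAt
        · subst h2
          rwa [hPbar_spr]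
      · intro t ht
        rcases lt_or_eq_of_le ht.2 with h2 | h2
        · exact hrsub (hball2 t ht.1 h2).1
        · subst h2
          rw [hPbar_spr]
          exact hrsub (Metric.mem_ball_self hr)
      · intro t ht
        have h3 : t ∈ Ioo (spr - ε) (spr + ε) :=
          ⟨lt_of_lt_of_le (by linarith) (le_trans ht2eps ht.1), by linarith [ht.2]⟩
        exact (hy t h3).continuousAt.continuousWithinAt
      · intro t ht
        have h3 : t ∈ Ioo (spr - ε) (spr + ε) :=
          ⟨lt_of_lt_of_le (by linarith) (le_trans ht2eps ht.1.le), by linarith [ht.2]⟩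
        exact (hy t h3).hasDerivWithinAt
      · intro t ht
        rcases lt_or_eq_of_le ht.2 with h2 | h2
        · exact hrsub (hball2 t ht.1 h2).2
        · subst h2
          rw [hy0]
          exact hrsub (Metric.mem_ball_self hr)
      · rw [hPbar_spr, hy0]
    have hagree : ∀ t, t2 < t → t < spr → w t = (y t).1 ∧ v t = (y t).2 := by
      intro t h1 h2
      have h3 := huniq ⟨h1.le, h2.le⟩
      rw [hPbar_eq t h2] at h3
      exact ⟨congrArg Prod.fst h3, congrArg Prod.snd h3⟩
    have hev3 : ∀ᶠ z in 𝓝 spr, ρ / 2 < (y z).1 := by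
      have h1 : ContinuousAt (fun z => (y z).1) spr := continuous_fst.continuousAt.comp hycont
      have h2 : ∀ᶠ x in 𝓝 ((y spr).1), ρ / 2 < x := by
        apply eventually_gt_nhds
        rw [hy0]
        linarith
      exact h1.eventually h2
    obtain ⟨δ0, hδ0, hδball⟩ := Metric.eventually_nhds_iff.1 hev3
    set δ := min (δ0 / 2) (ε / 2) with hδdef
    have hδpos : 0 < δ := lt_min (by linarith) (by linarith)
    have hδε : δ ≤ ε / 2 := min_le_right _ _
    have hδ0' : δ < δ0 := lt_of_le_of_lt (min_le_left _ _) (by linarith)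
    set w₁ : ℝ → ℝ := fun s => if s < spr then w s else (y s).1 with hw₁def
    set v₁ : ℝ → ℝ := fun s => if s < spr then v s else (y s).2 with hv₁def
    have hye : ∀ z, t2 < z → w₁ z = (y z).1 ∧ v₁ z = (y z).2 := by
      intro z h1
      rcases lt_or_ge z spr with h | h
      · rw [hw₁def, hv₁def]
        simp only [if_pos h]
        exact hagree z h1 h
      · rw [hw₁def, hv₁def]
        simp only [if_neg (not_lt.2 h)]
        exact ⟨trivial, trivial⟩
    refine hmax sm ((spr + δ : ℝ) : EReal) w₁ v₁ le_rfl ?_ ?_ ?_ ?_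
    · rw [hspr]
      exact_mod_cast (by linarith : spr ≤ spr + δ)
    · right
      rw [hspr]
      exact_mod_cast (by linarith : spr < spr + δ)
    · intro s h1 h2
      rw [hspr] at h2
      have h2' : s < spr := by exact_mod_cast h2
      rw [hw₁def, hv₁def]
      simp only [if_pos h2']
      exact ⟨trivial, trivial⟩
    constructor
    · calc sm < (s0 : EReal) := hs0m
        _ < ((spr + δ : ℝ) : EReal) := by exact_mod_cast (by linarith : s0 < spr + δ)
    intro s h1 h2
    have h2' : s < spr + δ := by exact_mod_cast h2
    rcases lt_or_ge s spr with hlt | hge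
    · obtain ⟨hp, hdw, hdv⟩ := hODE s h1 (by rw [hspr]; exact_mod_cast hlt)
      have e1 : w₁ s = w s := by rw [hw₁def]; simp only [if_pos hlt]
      have e2 : v₁ s = v s := by rw [hv₁def]; simp only [if_pos hlt]
      have hevw : w₁ =ᶠ[𝓝 s] w := by
        filter_upwards [Iio_mem_nhds hlt] with z hz
        rw [hw₁def]
        simp only [if_pos (mem_Iio.1 hz)]
      have hevv : v₁ =ᶠ[𝓝 s] v := by
        filter_upwards [Iio_mem_nhds hlt] with z hz
        rw [hv₁def]
        simp only [if_pos (mem_Iio.1 hz)]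
      refine ⟨by rw [e1]; exact hp, ?_, ?_⟩
      · rw [e1, e2]
        exact hdw.congr_of_eventuallyEq hevw
      · rw [e1, e2]
        exact hdv.congr_of_eventuallyEq hevv
    · have hsIoo : s ∈ Ioo (spr - ε) (spr + ε) := ⟨by linarith, by linarith⟩
      have hyd := hy s hsIoo
      have hy1 : HasDerivAt (fun z => (y z).1) ((F (y s)).1) s :=
        (ContinuousLinearMap.fst ℝ ℝ ℝ).hasFDerivAt.comp_hasDerivAt s hyd
      have hy2 : HasDerivAt (fun z => (y z).2) ((F (y s)).2) s :=
        (ContinuousLinearMap.snd ℝ ℝ ℝ).hasFDerivAt.comp_hasDerivAt s hyd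
      have ht2s : t2 < s := lt_of_lt_of_le ht2spr hge
      have e1 : w₁ s = (y s).1 := (hye s ht2s).1
      have e2 : v₁ s = (y s).2 := (hye s ht2s).2
      have hevw : w₁ =ᶠ[𝓝 s] fun z => (y z).1 := by
        filter_upwards [Ioi_mem_nhds ht2s] with z hz
        exact (hye z (mem_Ioi.1 hz)).1
      have hevv : v₁ =ᶠ[𝓝 s] fun z => (y z).2 := by
        filter_upwards [Ioi_mem_nhds ht2s] with z hz
        exact (hye z (mem_Ioi.1 hz)).2
      have hpos : 0 < (y s).1 := by
        have h3 : dist s spr < δ0 := by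
          rw [Real.dist_eq, abs_of_nonneg (by linarith)]
          linarith
        linarith [hδball h3, hρpos]
      refine ⟨by rw [e1]; exact hpos, ?_, ?_⟩
      · rw [e1, e2]
        have h4 : (F (y s)).1 = (y s).1 * ((a - 1) * (y s).2 - σ) := by rw [hFdef]
        exact h4 ▸ hy1.congr_of_eventuallyEq hevw
      · rw [e1, e2]
        have h4 : (F (y s)).2 = lam / γ - (y s).2 ^ 2 - (y s).1 / γ := by rw [hFdef]
        exact h4 ▸ hy2.congr_of_eventuallyEq hevv


  have hvinv0 : Tendsto (fun z => (v z)⁻¹) (𝓝[<] spr) (𝓝 0) := by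
    have h1 : Tendsto (fun z => -v z) (𝓝[<] spr) atTop := tendsto_neg_atTop_iff.2 hvbot
    have h2 := (tendsto_inv_atTop_zero.comp h1).neg
    rw [neg_zero] at h2
    refine h2.congr fun z => ?_
    simp [Function.comp, inv_neg]
  -- the key pointwise lower bound on |v| when `w` is bounded above
  have hL8 : ∀ Wb t4 : ℝ, s0 ≤ t4 → t4 < spr → (∀ s, t4 ≤ s → s < spr → w s ≤ Wb) →
      ∃ t5 : ℝ, t4 ≤ t5 ∧ t5 < spr ∧ ∀ s, t5 ≤ s → s < spr → v s * (2 * (spr - s)) ≤ -1 := by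
    intro Wb t4 ht4 ht4' hbdw
    have hWb : 0 < Wb := lt_of_lt_of_le (hfact' t4 ht4 ht4').1 (hbdw t4 le_rfl ht4')
    set B2 := Real.sqrt (lam / γ + Wb / γ) with hB2
    have hB2sq : B2 ^ 2 = lam / γ + Wb / γ := Real.sq_sqrt (by positivity)
    have hev : ∀ᶠ z in 𝓝[<] spr, v z ≤ -B2 := hvbot.eventually (eventually_le_atBot (-B2))
    obtain ⟨t5, ht5a, ht5b⟩ := (hev.and (hIoo t4 ht4')).exists
    refine ⟨t5, ht5b.1.le, ht5b.2, ?_⟩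
    have ht5s0 : s0 ≤ t5 := ht4.trans ht5b.1.le
    have hvB : ∀ s, t5 ≤ s → s < spr → v s ≤ -B2 := fun s h1 h2 =>
      le_trans (hmono t5 s ht5s0 h1 h2) ht5a
    have hkey : ∀ s s', t5 ≤ s → s ≤ s' → s' < spr → (v s')⁻¹ ≤ (v s)⁻¹ + 2 * (s' - s) := by
      intro s s' h1 h2 h3
      have hmh := monoHelp (f := fun z => 2 * z - (v z)⁻¹)
        (f' := fun z => 2 * 1 - -(lam / γ - v z ^ 2 - w z / γ) / (v z) ^ 2) h2
        (fun z hz => by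
          have hzs0 : s0 ≤ z := ht5s0.trans (h1.trans hz.1)
          have hzspr : z < spr := lt_of_le_of_lt hz.2 h3
          have h5 := hvneg' z hzs0 hzspr
          exact ((hasDerivAt_id z).const_mul 2).sub
            ((hfact' z hzs0 hzspr).2.2.inv h5.ne))
        (fun z hz => by
          have hzs0 : s0 ≤ z := ht5s0.trans (h1.trans hz.1)
          have hzspr : z < spr := lt_of_le_of_lt hz.2 h3
          have h5 := hvneg' z hzs0 hzspr
          have h5sq : (0:ℝ) < (v z) ^ 2 := by nlinarith
          have h6 : B2 ^ 2 ≤ v z ^ 2 := by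
            have := hvB z (h1.trans hz.1) hzspr
            have hB2pos : 0 < B2 := Real.sqrt_pos.2 (by positivity)
            nlinarith
          have h7 : 0 < w z := (hfact' z hzs0 hzspr).1
          have h8 : w z ≤ Wb := hbdw z (ht5b.1.le.trans (h1.trans hz.1)) hzspr
          rw [sub_nonneg, div_le_iff₀ h5sq]
          have h9 : w z / γ ≤ Wb / γ := by gcongr
          have h10 : 0 < lam / γ := hlg
          nlinarith [hB2sq])
      linarith
    intro s h1 h2
    have hle0 : 0 ≤ (v s)⁻¹ + 2 * (spr - s) := by
      refine le_of_tendsto hvinv0 ?_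
      filter_upwards [hIoo s h2] with z hz
      have := hkey s z h1 hz.1.le hz.2
      linarith [hz.2]
    have hvs := hvneg' s (ht5s0.trans h1) h2
    have h7 := mul_inv_cancel₀ hvs.ne
    nlinarith [mul_nonneg hle0 (neg_nonneg.2 hvs.le)]
  have hlogd : ∀ z : ℝ, z < spr → HasDerivAt (fun y => Real.log (spr - y)) ((spr - z)⁻¹ * (0 - 1)) z := by
    intro z hz
    have h1 : HasDerivAt (fun y : ℝ => spr - y) (0 - 1) z :=
      (hasDerivAt_const z spr).sub (hasDerivAt_id z)
    exact (Real.hasDerivAt_log (sub_ne_zero.2 (ne_of_lt hz).symm)).comp z h1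
  have hlog : Tendsto (fun s => Real.log (spr - s)) (𝓝[<] spr) atBot := by
    apply Real.tendsto_log_nhdsGT_zero.comp
    rw [tendsto_nhdsWithin_iff]
    constructor
    · have h1 : Tendsto (fun s : ℝ => spr - s) (𝓝 spr) (𝓝 (spr - spr)) :=
        tendsto_const_nhds.sub tendsto_id
      rw [sub_self] at h1
      exact h1.mono_left nhdsWithin_le_nhds
    · filter_upwards [self_mem_nhdsWithin] with z hz
      exact mem_Ioi.2 (by simp only [mem_Iio] at hz; linarith)
  -- case a = 1
  have case_eq : a = 1 → ∃ L : ℝ, 0 < L ∧ Tendsto w (𝓝[<] spr) (𝓝 L) := by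
    intro ha1
    refine ⟨w0 * Real.exp (σ * s0 - σ * spr), by positivity, ?_⟩
    have hconst : ∀ s, s0 ≤ s → s < spr → w s = w0 * Real.exp (σ * s0 - σ * s) := by
      intro s h1 h2
      have hder : ∀ z ∈ Icc s0 s, HasDerivAt (fun y => w y * Real.exp (σ * y))
          (w z * ((a - 1) * v z - σ) * Real.exp (σ * z) + w z * (Real.exp (σ * z) * (σ * 1))) z := by
        intro z hz
        have h3 := (hfact' z hz.1 (lt_of_le_of_lt hz.2 h2)).2.1
        have h4 : HasDerivAt (fun y : ℝ => Real.exp (σ * y)) (Real.exp (σ * z) * (σ * 1)) z :=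
          (Real.hasDerivAt_exp (σ * z)).comp z ((hasDerivAt_id z).const_mul σ)
        exact h3.mul h4
      have hzero : ∀ z ∈ Icc s0 s,
          w z * ((a - 1) * v z - σ) * Real.exp (σ * z) + w z * (Real.exp (σ * z) * (σ * 1)) = 0 := by
        intro z hz; rw [ha1]; ring
      have h5 := monoHelp (f := fun y => w y * Real.exp (σ * y)) h1 hder
        (fun z hz => le_of_eq (hzero z hz).symm)
      have h6 := antiHelp (f := fun y => w y * Real.exp (σ * y)) h1 hder
        (fun z hz => le_of_eq (hzero z hz))
      have h7 : w s * Real.exp (σ * s) = w s0 * Real.exp (σ * s0) := le_antisymm h6 h5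
      rw [hw] at h7
      have h8 : Real.exp (σ * s) ≠ 0 := (Real.exp_pos _).ne'
      have h9 : w s = w0 * Real.exp (σ * s0) / Real.exp (σ * s) := by
        rw [eq_div_iff h8]; exact h7
      rw [h9, Real.exp_sub]; ring
    have hcont : Tendsto (fun s => w0 * Real.exp (σ * s0 - σ * s)) (𝓝[<] spr)
        (𝓝 (w0 * Real.exp (σ * s0 - σ * spr))) := by
      refine Tendsto.mono_left ?_ nhdsWithin_le_nhds
      exact Continuous.tendsto (by fun_prop) spr
    refine hcont.congr' ?_
    filter_upwards [hIoo s0 hs0spr] with z hz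
    exact (hconst z hz.1.le hz.2).symm
  -- case a > 1
  have case_gt : 1 < a → Tendsto w (𝓝[<] spr) (𝓝 0) := by
    intro ha1
    have hwbd : ∀ s, s0 ≤ s → s < spr → w s ≤ w s0 := by
      intro s h1 h2
      refine antiHelp (f := w) (f' := fun z => w z * ((a - 1) * v z - σ)) h1
        (fun z hz => (hfact' z hz.1 (lt_of_le_of_lt hz.2 h2)).2.1) (fun z hz => ?_)
      have h3 := (hfact' z hz.1 (lt_of_le_of_lt hz.2 h2)).1
      have h4 := hvneg' z hz.1 (lt_of_le_of_lt hz.2 h2)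
      show w z * ((a - 1) * v z - σ) ≤ 0
      have h5 : (a - 1) * v z < 0 := mul_neg_of_pos_of_neg (by linarith) h4
      exact (mul_neg_of_pos_of_neg h3 (by linarith)).le
    obtain ⟨t5, ht5a, ht5b, hvb⟩ := hL8 (w s0) s0 le_rfl hs0spr hwbd
    set C1 := u t5 - (a - 1) / 2 * Real.log (spr - t5) with hC1
    have hψ : ∀ s, t5 ≤ s → s < spr → u s ≤ C1 + (a - 1) / 2 * Real.log (spr - s) := by
      intro s h1 h2
      have hmh := antiHelp (f := fun z => u z - (a - 1) / 2 * Real.log (spr - z))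
        (f' := fun z => ((a - 1) * v z - σ) - (a - 1) / 2 * ((spr - z)⁻¹ * (0 - 1))) h1
        (fun z hz => by
          have hz2 : z < spr := lt_of_le_of_lt hz.2 h2
          exact (hud z (ht5a.trans hz.1) hz2).sub ((hlogd z hz2).const_mul ((a - 1) / 2)))
        (fun z hz => by
          have hz2 : z < spr := lt_of_le_of_lt hz.2 h2
          have h5 := hvb z hz.1 hz2
          have hd1 : 0 < spr - z := by linarith
          have hd2 := mul_inv_cancel₀ hd1.ne'
          nlinarith [inv_pos.2 hd1, hσ])
      rw [hC1]; linarith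
    have hupper : Tendsto (fun s => Real.exp (C1 + (a - 1) / 2 * Real.log (spr - s)))
        (𝓝[<] spr) (𝓝 0) := by
      apply Real.tendsto_exp_atBot.comp
      apply tendsto_atBot_add_const_left _ C1
      exact (tendsto_const_mul_atBot_of_pos (by linarith : (0:ℝ) < (a - 1) / 2)).2 hlog
    refine tendsto_of_tendsto_of_tendsto_of_le_of_le' tendsto_const_nhds hupper ?_ ?_
    · filter_upwards [hIoo t5 ht5b] with z hz
      exact (hfact' z (ht5a.trans hz.1.le) hz.2).1.le
    · filter_upwards [hIoo t5 ht5b] with z hz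
      rw [hweq z (ht5a.trans hz.1.le) hz.2]
      exact Real.exp_le_exp.2 (hψ z hz.1.le hz.2)
  -- case a < 1
  have case_lt : a < 1 → Tendsto w (𝓝[<] spr) atTop := by
    intro ha1
    have ha1' : a - 1 < 0 := by linarith
    obtain ⟨t6, ht6v, ht6mem⟩ :=
      ((hvbot.eventually (eventually_le_atBot (σ / (a - 1)))).and (hIoo s0 hs0spr)).exists
    have ht6s0 : s0 ≤ t6 := ht6mem.1.le
    have ht6spr : t6 < spr := ht6mem.2
    have hu'pos : ∀ z, t6 ≤ z → z < spr → 0 ≤ (a - 1) * v z - σ := by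
      intro z h1 h2
      have h3 : v z ≤ σ / (a - 1) := le_trans (hmono t6 z ht6s0 h1 h2) ht6v
      have h4 := mul_le_mul_of_nonpos_left h3 ha1'.le
      rw [mul_comm (a - 1) (σ / (a - 1)), div_mul_cancel₀ σ (show a - 1 ≠ 0 by linarith)] at h4
      linarith
    have humono : MonotoneOn u (Ico t6 spr) := by
      intro x hx y hy hxy
      exact monoHelp hxy
        (fun z hz => hud z (ht6s0.trans (hx.1.trans hz.1)) (lt_of_le_of_lt hz.2 hy.2))
        (fun z hz => hu'pos z (hx.1.trans hz.1) (lt_of_le_of_lt hz.2 hy.2))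
    by_cases hbdd : BddAbove (u '' Ico t6 spr)
    · exfalso
      obtain ⟨U, hU⟩ := hbdd
      have hwbd : ∀ s, t6 ≤ s → s < spr → w s ≤ Real.exp U := by
        intro s h1 h2
        rw [hweq s (ht6s0.trans h1) h2]
        exact Real.exp_le_exp.2 (hU (mem_image_of_mem u ⟨h1, h2⟩))
      obtain ⟨t5, ht5a, ht5b, hvb⟩ := hL8 (Real.exp U) t6 ht6s0 ht6spr hwbd
      set C2 := u t5 + (1 - a) / 2 * Real.log (spr - t5) + σ * t5 with hC2
      have hχ : ∀ s, t5 ≤ s → s < spr →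
          C2 - (1 - a) / 2 * Real.log (spr - s) - σ * s ≤ u s := by
        intro s h1 h2
        have hmh := monoHelp (f := fun z => u z + (1 - a) / 2 * Real.log (spr - z) + σ * z)
          (f' := fun z => (((a - 1) * v z - σ) + (1 - a) / 2 * ((spr - z)⁻¹ * (0 - 1))) + σ * 1) h1
          (fun z hz => by
            have hz2 : z < spr := lt_of_le_of_lt hz.2 h2
            have hz0 : s0 ≤ z := ht6s0.trans (ht5a.trans hz.1)
            exact ((hud z hz0 hz2).add ((hlogd z hz2).const_mul ((1 - a) / 2))).add
              ((hasDerivAt_id z).const_mul σ))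
          (fun z hz => by
            have hz2 : z < spr := lt_of_le_of_lt hz.2 h2
            have h5 := hvb z hz.1 hz2
            have hd1 : 0 < spr - z := by linarith
            have hd2 := mul_inv_cancel₀ hd1.ne'
            nlinarith [inv_pos.2 hd1])
        rw [hC2]; linarith
      have hRtop : Tendsto (fun s => C2 - (1 - a) / 2 * Real.log (spr - s) - σ * s)
          (𝓝[<] spr) atTop := by
        have h1 : Tendsto (fun s => -((1 - a) / 2) * Real.log (spr - s)) (𝓝[<] spr) atTop :=
          (tendsto_const_mul_atTop_of_neg (by linarith : -((1 - a) / 2) < (0:ℝ))).2 hlog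
        have h2 : Tendsto (fun s => C2 + -((1 - a) / 2) * Real.log (spr - s)) (𝓝[<] spr) atTop :=
          tendsto_atTop_add_const_left _ C2 h1
        refine (tendsto_atTop_add_right_of_le' (g := fun s => -σ * s) (𝓝[<] spr) (-σ * spr)
          h2 ?_).congr fun s => by ring
        filter_upwards [self_mem_nhdsWithin] with z hz
        simp only [mem_Iio] at hz
        nlinarith [hσ]
      obtain ⟨T, hT1, hT2⟩ :=
        ((hRtop.eventually (eventually_ge_atTop (U + 1))).and (hIoo t5 ht5b)).exists
      have h4 := hχ T hT2.1.le hT2.2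
      have hUT : u T ≤ U := hU (mem_image_of_mem u ⟨ht5a.trans hT2.1.le, hT2.2⟩)
      linarith
    · have hut := tendsto_mono_Ico_atTop humono hbdd
      refine (Real.tendsto_exp_atTop.comp hut).congr' ?_
      filter_upwards [hIoo t6 ht6spr] with z hz
      simp only [Function.comp]
      exact (hweq z (ht6s0.trans hz.1.le) hz.2).symm
  exact ⟨spr, hspr, hvbot, case_lt, case_eq, case_gt⟩
end

section
/- Let a > 0 and let (w, v) be a maximal solution of (LKS) on (s_−, s_+) with w > 0, and suppose s_+ < +∞. Fix s₀ ∈ (s_−, s_+) and S₀ > 0, and define S(s) = S₀·exp(∫_{s₀}^{s} v(τ) dτ) and u(s) = w(s)·S(s) for s ∈ (s_−, s_+). Then S(s) → 0 and u(s) → 0 as s → s_+⁻. -/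
open Set Filter Topology

lemma deriv_nonpos_le {f f' : ℝ → ℝ} {p q : ℝ} (hpq : p ≤ q)
    (hd : ∀ x ∈ Icc p q, HasDerivAt f (f' x) x)
    (h0 : ∀ x ∈ Icc p q, f' x ≤ 0) : f q ≤ f p := by
  have hA : AntitoneOn f (Icc p q) := by
    apply antitoneOn_of_deriv_nonpos (convex_Icc p q)
    · exact fun x hx => (hd x hx).continuousAt.continuousWithinAt
    · intro x hx
      rw [interior_Icc] at hx
      exact (hd x (Ioo_subset_Icc_self hx)).differentiableAt.differentiableWithinAt
    · intro x hx
      rw [interior_Icc] at hx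
      rw [(hd x (Ioo_subset_Icc_self hx)).deriv]
      exact h0 x (Ioo_subset_Icc_self hx)
  exact hA (left_mem_Icc.2 hpq) (right_mem_Icc.2 hpq) hpq

lemma eq_of_hasDerivAt_zero {f : ℝ → ℝ} {p q : ℝ} (hpq : p ≤ q)
    (hd : ∀ x ∈ Icc p q, HasDerivAt f 0 x) : f q = f p := by
  have h1 := deriv_nonpos_le (f' := fun _ => 0) hpq hd (fun x _ => le_rfl)
  have h2 := deriv_nonpos_le (f := fun x => -f x) (f' := fun _ => 0) hpq
    (fun x hx => ((hd x hx).neg).congr_deriv (by ring)) (fun x _ => le_rfl)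
  simp at h2
  linarith


/-- solution formula for `u' = u g` along an open ord-connected set. -/
lemma linODE_formula {u g : ℝ → ℝ} {J : Set ℝ} (hJ : IsOpen J) (hJc : J.OrdConnected)
    (hd : ∀ x ∈ J, HasDerivAt u (u x * g x) x) (hg : ContinuousOn g J)
    {c t : ℝ} (hc : c ∈ J) (ht : t ∈ J) :
    u t = u c * Real.exp (∫ τ in c..t, g τ) := by
  set G : ℝ → ℝ := fun x => ∫ τ in c..x, g τ with hGdef
  have hG : ∀ x ∈ J, HasDerivAt G (g x) x := by
    intro x hx
    apply intervalIntegral.integral_hasDerivAt_right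
    · exact (hg.mono (hJc.uIcc_subset hc hx)).intervalIntegrable
    · exact hg.stronglyMeasurableAtFilter hJ x hx
    · exact hg.continuousAt (hJ.mem_nhds hx)
  have hh : ∀ x ∈ J, HasDerivAt (fun x => u x * Real.exp (-G x)) 0 x := by
    intro x hx
    have h1 := (hd x hx).mul (((hG x hx).neg).exp)
    exact h1.congr_deriv (by ring)
  have key : u t * Real.exp (-G t) = u c * Real.exp (-G c) := by
    rcases le_total c t with h | h
    · exact eq_of_hasDerivAt_zero h (fun x hx => hh x (hJc.out hc ht ⟨hx.1, hx.2⟩))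
    · exact (eq_of_hasDerivAt_zero h (fun x hx => hh x (hJc.out ht hc ⟨hx.1, hx.2⟩))).symm
  have hGc : G c = 0 := intervalIntegral.integral_same
  have hpos : Real.exp (-G t) ≠ 0 := (Real.exp_pos _).ne'
  rw [hGc] at key
  simp only [neg_zero, Real.exp_zero, mul_one] at key
  have h2 := congrArg (· * Real.exp (G t)) key
  simpa [mul_assoc, ← Real.exp_add] using h2


lemma hasDerivAt_fst {f : ℝ → ℝ × ℝ} {d : ℝ × ℝ} {t : ℝ} (h : HasDerivAt f d t) :
    HasDerivAt (fun t => (f t).1) d.1 t := by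
  have := (ContinuousLinearMap.fst ℝ ℝ ℝ).hasFDerivAt.comp_hasDerivAt t h
  exact this

lemma hasDerivAt_snd {f : ℝ → ℝ × ℝ} {d : ℝ × ℝ} {t : ℝ} (h : HasDerivAt f d t) :
    HasDerivAt (fun t => (f t).2) d.2 t := by
  have := (ContinuousLinearMap.snd ℝ ℝ ℝ).hasFDerivAt.comp_hasDerivAt t h
  exact this

noncomputable def Fvec (a σ γ lam : ℝ) : ℝ × ℝ → ℝ × ℝ :=
  fun p => (p.1 * ((a - 1) * p.2 - σ), lam / γ - p.2 ^ 2 - p.1 / γ)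

lemma Fvec_contDiff (a σ γ lam : ℝ) : ContDiff ℝ 1 (Fvec a σ γ lam) := by
  unfold Fvec
  apply ContDiff.prodMk
  · exact contDiff_fst.mul (((contDiff_const.mul contDiff_snd)).sub contDiff_const)
  · exact (contDiff_const.sub (contDiff_snd.pow 2)).sub (contDiff_fst.div_const γ)

/-- Uniform Picard–Lindelöf data on a compact set `K`. -/
lemma Fvec_uniform_PL (a σ γ lam : ℝ) {K : Set (ℝ × ℝ)} (hK : IsCompact K) :
    ∃ ε > (0:ℝ), ∀ x₀ ∈ K, ∀ t₀ : ℝ,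
      ∃ f : ℝ → ℝ × ℝ, f t₀ = x₀ ∧
        ∀ t ∈ Ioo (t₀ - ε) (t₀ + ε), HasDerivAt f (Fvec a σ γ lam (f t)) t := by
  set F := Fvec a σ γ lam
  obtain ⟨r, hr0, hr⟩ : ∃ r : ℝ, 0 ≤ r ∧ K ⊆ Metric.closedBall 0 r := by
    rcases hK.isBounded.subset_closedBall 0 with ⟨r, hr⟩
    exact ⟨max r 0, le_max_right _ _,
      hr.trans (Metric.closedBall_subset_closedBall (le_max_left _ _))⟩
  have hBcomp : IsCompact (Metric.closedBall (0:ℝ×ℝ) (r+1)) := isCompact_closedBall _ _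
  -- sup bound for F
  obtain ⟨C, hC⟩ := hBcomp.exists_bound_of_continuousOn
    ((Fvec_contDiff a σ γ lam).continuous.continuousOn)
  have hC0 : 0 ≤ C := le_trans (norm_nonneg _) (hC 0 (by simp [Metric.mem_closedBall]; linarith))
  -- Lipschitz bound for F
  obtain ⟨Cd, hCd⟩ := hBcomp.exists_bound_of_continuousOn
    (((Fvec_contDiff a σ γ lam).continuous_fderiv one_ne_zero).continuousOn)
  have hlip : LipschitzOnWith Cd.toNNReal F (Metric.closedBall 0 (r+1)) := by
    apply (convex_closedBall _ _).lipschitzOnWith_of_nnnorm_fderiv_le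
      (fun x _ => ((Fvec_contDiff a σ γ lam).differentiable one_ne_zero).differentiableAt)
    intro x hx
    rw [← NNReal.coe_le_coe]
    exact le_trans (hCd x hx) (le_max_left _ _)
  refine ⟨min 1 (1/(C+1)), lt_min one_pos (by positivity), ?_⟩
  intro x₀ hx₀ t₀
  set ε := min 1 (1/(C+1))
  have hball : Metric.closedBall x₀ 1 ⊆ Metric.closedBall 0 (r+1) := by
    intro y hy
    have h1 : dist y x₀ ≤ 1 := Metric.mem_closedBall.1 hy
    have h2 : dist x₀ 0 ≤ r := Metric.mem_closedBall.1 (hr hx₀)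
    exact Metric.mem_closedBall.2 (le_trans (dist_triangle y x₀ 0) (by linarith))
  have hεpos : 0 < ε := lt_min one_pos (show (0:ℝ) < 1/(C+1) by positivity)
  have hpl : IsPicardLindelof (fun _ => F) (tmin := t₀ - ε) (tmax := t₀ + ε)
      ⟨t₀, ⟨by linarith, by linarith⟩⟩ x₀ 1 0 C.toNNReal Cd.toNNReal := by
    apply IsPicardLindelof.of_time_independent
    · intro x hx
      rw [Real.coe_toNNReal _ hC0]
      exact hC x (hball (by simpa using hx))
    · simpa using hlip.mono hball
    · have : max (t₀ + ε - t₀) (t₀ - (t₀ - ε)) = ε := by simp [hεpos.le]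
      simp only [Real.coe_toNNReal _ hC0, NNReal.coe_one, NNReal.coe_zero, sub_zero]
      rw [this]
      calc C * ε ≤ C * (1/(C+1)) := by
            apply mul_le_mul_of_nonneg_left (min_le_right _ _) hC0
        _ ≤ 1 := by
            rw [mul_one_div, div_le_one (by positivity)]; linarith
  obtain ⟨f, hf0, hf⟩ := hpl.exists_eq_forall_mem_Icc_hasDerivWithinAt₀
  exact ⟨f, hf0, fun t ht => (hf t (Ioo_subset_Icc_self ht)).hasDerivAt
    (Icc_mem_nhds ht.1 ht.2)⟩

lemma Fvec_lipschitz_ball (a σ γ lam ρ : ℝ) :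
    ∃ L : NNReal, LipschitzOnWith L (Fvec a σ γ lam) (Metric.closedBall 0 ρ) := by
  obtain ⟨Cd, hCd⟩ := (isCompact_closedBall (0:ℝ×ℝ) ρ).exists_bound_of_continuousOn
    (((Fvec_contDiff a σ γ lam).continuous_fderiv one_ne_zero).continuousOn)
  refine ⟨Cd.toNNReal, (convex_closedBall _ _).lipschitzOnWith_of_nnnorm_fderiv_le
    (fun x _ => ((Fvec_contDiff a σ γ lam).differentiable one_ne_zero).differentiableAt) ?_⟩
  intro x hx
  rw [← NNReal.coe_le_coe]
  exact le_trans (hCd x hx) (le_max_left _ _)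


/-- Key maximality consequence: `v` is unbounded below near `spr`. -/
lemma v_unbounded_below (a σ γ lam : ℝ) (hγ : 0 < γ) (hlam : 0 < lam)
    (sm : EReal) (spr : ℝ) (w v : ℝ → ℝ)
    (hsol : IsMaxLKSSol a σ γ lam sm (spr : EReal) w v)
    (M s₁ : ℝ) (hs₁m : sm < (s₁ : EReal)) (hs₁p : s₁ < spr) :
    ∃ s : ℝ, s₁ < s ∧ s < spr ∧ v s < -M := by
  by_contra hcon
  push_neg at hcon
  obtain ⟨hLKS, hmax⟩ := hsol
  -- basic facts
  have hmem : ∀ s : ℝ, s₁ ≤ s → s < spr → sm < (s : EReal) ∧ (s : EReal) < (spr : EReal) :=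
    fun s h1 h2 => ⟨lt_of_lt_of_le hs₁m (EReal.coe_le_coe_iff.2 h1), EReal.coe_lt_coe_iff.2 h2⟩
  have hwpos : ∀ s : ℝ, s₁ ≤ s → s < spr → 0 < w s :=
    fun s h1 h2 => (hLKS.2 s (hmem s h1 h2).1 (hmem s h1 h2).2).1
  have hw' : ∀ s : ℝ, s₁ ≤ s → s < spr →
      HasDerivAt w (w s * ((a - 1) * v s - σ)) s :=
    fun s h1 h2 => (hLKS.2 s (hmem s h1 h2).1 (hmem s h1 h2).2).2.1
  have hv' : ∀ s : ℝ, s₁ ≤ s → s < spr →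
      HasDerivAt v (lam / γ - v s ^ 2 - w s / γ) s :=
    fun s h1 h2 => (hLKS.2 s (hmem s h1 h2).1 (hmem s h1 h2).2).2.2
  -- v bounds on Ico s₁ spr
  set lo : ℝ := -(max M |v s₁|) with hlo_def
  set hi : ℝ := v s₁ + lam / γ * (spr - s₁) with hhi_def
  have hvlo : ∀ s ∈ Ico s₁ spr, lo ≤ v s := by
    rintro s ⟨h1, h2⟩
    rcases eq_or_lt_of_le h1 with heq | h1'
    · rw [← heq]
      have := neg_abs_le (v s₁); have := le_max_right M |v s₁|
      simp only [hlo_def]; linarith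
    · have := hcon s h1' h2
      have := le_max_left M |v s₁|
      simp only [hlo_def]; linarith
  have hvhi : ∀ s ∈ Ico s₁ spr, v s ≤ hi := by
    rintro s ⟨h1, h2⟩
    have key : v s - lam / γ * s ≤ v s₁ - lam / γ * s₁ := by
      apply deriv_nonpos_le (f := fun t => v t - lam / γ * t)
        (f' := fun t => (lam / γ - v t ^ 2 - w t / γ) - lam / γ) h1
      · intro x hx
        exact (hv' x hx.1 (lt_of_le_of_lt hx.2 h2)).sub
          ((hasDerivAt_id x).const_mul (lam / γ) |>.congr_deriv (by ring))
      · intro x hx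
        have h3 := hwpos x hx.1 (lt_of_le_of_lt hx.2 h2)
        have h4 := sq_nonneg (v x)
        have h5 : 0 < lam / γ := by positivity
        have : 0 < w x / γ := by positivity
        nlinarith
    have h5 : 0 ≤ lam / γ := by positivity
    have h6 : s - s₁ ≤ spr - s₁ := by linarith
    simp only [hhi_def]
    nlinarith [mul_le_mul_of_nonneg_left h6 h5]
  -- real point below s₁
  obtain ⟨sβ, hsβ1, hsβ2⟩ : ∃ x : ℝ, sm < (x:EReal) ∧ x < s₁ := by
    obtain ⟨x, hx1, hx2⟩ := EReal.lt_iff_exists_real_btwn.1 hs₁m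
    exact ⟨x, hx1, EReal.coe_lt_coe_iff.1 hx2⟩
  have hJw_sub : ∀ x ∈ Ioo sβ spr, sm < (x:EReal) ∧ (x:EReal) < (spr:EReal) := fun x hx =>
    ⟨lt_trans hsβ1 (EReal.coe_lt_coe_iff.2 hx.1), EReal.coe_lt_coe_iff.2 hx.2⟩
  have hs₁Jw : s₁ ∈ Ioo sβ spr := ⟨hsβ2, hs₁p⟩
  have hvcJ : ContinuousOn v (Ioo sβ spr) := fun x hx =>
    ((hLKS.2 x (hJw_sub x hx).1 (hJw_sub x hx).2).2.2).continuousAt.continuousWithinAt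
  have hw_eq : ∀ s ∈ Ioo sβ spr, w s = w s₁ * Real.exp (∫ τ in s₁..s, ((a-1) * v τ - σ)) :=
    fun s hs => linODE_formula isOpen_Ioo Set.ordConnected_Ioo
      (fun x hx => (hLKS.2 x (hJw_sub x hx).1 (hJw_sub x hx).2).2.1)
      (((continuousOn_const.mul hvcJ).sub continuousOn_const)) hs₁Jw hs
  set Mv : ℝ := max (max M |v s₁|) |hi| + 1 with hMv_def
  have hvabs : ∀ s ∈ Ico s₁ spr, |v s| ≤ Mv := by
    intro s hs
    have h3 := hvlo s hs; have h4 := hvhi s hs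
    rw [abs_le]
    have h5 := le_max_left (max M |v s₁|) |hi|
    have h6 := le_max_right (max M |v s₁|) |hi|
    have h7 := le_abs_self hi
    constructor <;> simp only [hMv_def, hlo_def] at * <;> linarith
  have hMv0 : 0 ≤ Mv := by
    have := abs_nonneg (v s₁)
    have h5 := le_max_right M |v s₁|
    have h6 := le_max_left (max M |v s₁|) |hi|
    simp only [hMv_def]; linarith
  set Cg : ℝ := (|a-1| * Mv + |σ|) * (spr - s₁) with hCg_def
  set wlo : ℝ := w s₁ * Real.exp (-Cg) with hwlo_def
  set whi : ℝ := w s₁ * Real.exp Cg with hwhi_def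
  have hwbound : ∀ s ∈ Ico s₁ spr, wlo ≤ w s ∧ w s ≤ whi := by
    rintro s ⟨h1, h2⟩
    have hsJw : s ∈ Ioo sβ spr := ⟨lt_of_lt_of_le hsβ2 h1, h2⟩
    have hint : |∫ τ in s₁..s, ((a-1) * v τ - σ)| ≤ Cg := by
      have hb : ∀ x ∈ Set.uIoc s₁ s, ‖(a-1) * v x - σ‖ ≤ |a-1| * Mv + |σ| := by
        intro x hx
        rw [Set.uIoc_of_le h1] at hx
        have hx' : x ∈ Ico s₁ spr := ⟨le_of_lt hx.1, lt_of_le_of_lt hx.2 h2⟩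
        have hvx := hvabs x hx'
        calc ‖(a-1) * v x - σ‖ ≤ |(a-1) * v x| + |σ| := abs_sub _ _
          _ ≤ |a-1| * Mv + |σ| := by
              rw [abs_mul]
              have := mul_le_mul_of_nonneg_left hvx (abs_nonneg (a-1))
              linarith
      have h8 := intervalIntegral.norm_integral_le_of_norm_le_const hb
      have h9 : |s - s₁| ≤ spr - s₁ := by rw [abs_of_nonneg (by linarith)]; linarith
      calc |∫ τ in s₁..s, ((a-1) * v τ - σ)| ≤ (|a-1| * Mv + |σ|) * |s - s₁| := h8
        _ ≤ Cg := by
            simp only [hCg_def]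
            exact mul_le_mul_of_nonneg_left h9 (by positivity)
    rw [hw_eq s hsJw]
    have hws₁ := hwpos s₁ le_rfl hs₁p
    rcases abs_le.1 hint with ⟨hil, hiu⟩
    constructor
    · simp only [hwlo_def]
      exact mul_le_mul_of_nonneg_left (Real.exp_le_exp.2 hil) hws₁.le
    · simp only [hwhi_def]
      exact mul_le_mul_of_nonneg_left (Real.exp_le_exp.2 hiu) hws₁.le
  -- the compact trajectory set
  have hKcomp : IsCompact ((Icc wlo whi) ×ˢ (Icc (-Mv) Mv)) := isCompact_Icc.prod isCompact_Icc
  have htraj : ∀ s ∈ Ico s₁ spr, (w s, v s) ∈ (Icc wlo whi) ×ˢ (Icc (-Mv) Mv) := by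
    intro s hs
    refine ⟨⟨(hwbound s hs).1, (hwbound s hs).2⟩, ?_⟩
    rcases abs_le.1 (hvabs s hs) with ⟨h1, h2⟩
    exact ⟨h1, h2⟩
  obtain ⟨ε, hε, hPL⟩ := Fvec_uniform_PL a σ γ lam hKcomp
  set sstar : ℝ := (max s₁ (spr - ε/2) + spr)/2 with hsstar_def
  have hmaxlt : max s₁ (spr - ε/2) < spr := max_lt hs₁p (by linarith)
  have hs₁star : s₁ < sstar := by
    have := le_max_left s₁ (spr - ε/2)
    simp only [hsstar_def]; linarith
  have hstarspr : sstar < spr := by simp only [hsstar_def]; linarith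
  have hstar2 : spr - ε/2 < sstar := by
    have := le_max_right s₁ (spr - ε/2)
    simp only [hsstar_def]; linarith
  obtain ⟨f, hf0, hfd⟩ := hPL (w sstar, v sstar) (htraj sstar ⟨hs₁star.le, hstarspr⟩) sstar
  set α : ℝ := max s₁ (sstar - ε/2) with hα_def
  have hα1 : α < sstar := max_lt hs₁star (by linarith)
  have hα2 : s₁ ≤ α := le_max_left _ _
  have hα3 : sstar - ε < α := lt_of_lt_of_le (by linarith) (le_max_right _ _)
  have hαspr : α < spr := lt_trans hα1 hstarspr
  have hsprtpr : spr < sstar + ε := by linarith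
  -- derivative of the pair (w, v)
  have hgd : ∀ t, s₁ ≤ t → t < spr →
      HasDerivAt (fun t => (w t, v t)) (Fvec a σ γ lam (w t, v t)) t := by
    intro t h1 h2
    have := (hw' t h1 h2).prodMk (hv' t h1 h2)
    simpa [Fvec] using this
  -- uniqueness: f agrees with (w, v) on (α, spr)
  have heq : ∀ t, α < t → t < spr → f t = (w t, v t) := by
    intro t ht1 ht2
    set T' : ℝ := (max t sstar + min spr (sstar + ε))/2 with hT'_def
    have hltmin : max t sstar < min spr (sstar + ε) :=
      max_lt (lt_min ht2 (by linarith)) (lt_min hstarspr (by linarith))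
    have hT1 : max t sstar < T' := by simp only [hT'_def]; linarith [min_le_left spr (sstar + ε)]
    have hT2 : T' < spr := by
      have h1 := min_le_left spr (sstar + ε)
      have h2 := le_max_left t sstar
      simp only [hT'_def]; linarith
    have hT3 : T' < sstar + ε := by
      have h1 := min_le_right spr (sstar + ε)
      have h2 := le_max_left t sstar
      simp only [hT'_def]; linarith
    have hIccsub : Icc α T' ⊆ Ioo (sstar - ε) (sstar + ε) :=
      fun x hx => ⟨lt_of_lt_of_le hα3 hx.1, lt_of_le_of_lt hx.2 hT3⟩
    have hfc : ContinuousOn f (Icc α T') :=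
      fun x hx => (hfd x (hIccsub hx)).continuousAt.continuousWithinAt
    obtain ⟨ρ1, hρ1⟩ := (isCompact_Icc.image_of_continuousOn hfc).isBounded.subset_closedBall 0
    obtain ⟨ρ2, hρ2⟩ := hKcomp.isBounded.subset_closedBall 0
    obtain ⟨L, hL⟩ := Fvec_lipschitz_ball a σ γ lam (max ρ1 ρ2)
    have hsub1 : Metric.closedBall (0:ℝ×ℝ) ρ1 ⊆ Metric.closedBall 0 (max ρ1 ρ2) :=
      Metric.closedBall_subset_closedBall (le_max_left _ _)
    have hsub2 : Metric.closedBall (0:ℝ×ℝ) ρ2 ⊆ Metric.closedBall 0 (max ρ1 ρ2) :=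
      Metric.closedBall_subset_closedBall (le_max_right _ _)
    have hstarIoo : sstar ∈ Ioo α T' := ⟨hα1, lt_of_le_of_lt (le_max_right t sstar) hT1⟩
    have huniq := ODE_solution_unique_of_mem_Ioo
      (v := fun _ => Fvec a σ γ lam) (s := fun _ => Metric.closedBall 0 (max ρ1 ρ2))
      (fun _ _ => hL) hstarIoo
      (f := f)
      (fun x hx => ⟨hfd x (hIccsub (Ioo_subset_Icc_self hx)),
        hsub1 (hρ1 (mem_image_of_mem f (Ioo_subset_Icc_self hx)))⟩)
      (g := fun t => (w t, v t))
      (fun x hx => ⟨hgd x (le_trans hα2 hx.1.le) (lt_trans hx.2 hT2),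
        hsub2 (hρ2 (htraj x ⟨le_trans hα2 hx.1.le, lt_trans hx.2 hT2⟩))⟩)
      (by rw [hf0])
    exact huniq ⟨ht1, lt_of_le_of_lt (le_max_left t sstar) hT1⟩
  -- glued functions
  set w1 : ℝ → ℝ := fun t => if t < spr then w t else (f t).1 with hw1_def
  set v1 : ℝ → ℝ := fun t => if t < spr then v t else (f t).2 with hv1_def
  have hw1lt : ∀ t, t < spr → w1 t = w t := fun t ht => by
    simp only [hw1_def]; exact if_pos ht
  have hv1lt : ∀ t, t < spr → v1 t = v t := fun t ht => by
    simp only [hv1_def]; exact if_pos ht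
  have hw1ge : ∀ t, ¬ t < spr → w1 t = (f t).1 := fun t ht => by
    simp only [hw1_def]; exact if_neg ht
  have hv1ge : ∀ t, ¬ t < spr → v1 t = (f t).2 := fun t ht => by
    simp only [hv1_def]; exact if_neg ht
  have hcoelt : (spr : EReal) < ((sstar + ε : ℝ) : EReal) := EReal.coe_lt_coe_iff.2 hsprtpr
  apply hmax sm ((sstar + ε : ℝ) : EReal) w1 v1 le_rfl hcoelt.le (Or.inr hcoelt)
    (fun s hs1 hs2 => by
      have hlt : s < spr := EReal.coe_lt_coe_iff.1 hs2
      exact ⟨hw1lt s hlt, hv1lt s hlt⟩)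
  constructor
  · exact lt_trans hs₁m (lt_trans (EReal.coe_lt_coe_iff.2 hs₁p) hcoelt)
  intro s hs1 hs2
  by_cases hsspr : s < spr
  · have hevw : w1 =ᶠ[𝓝 s] w := by
      filter_upwards [Iio_mem_nhds hsspr] with t ht
      exact hw1lt t ht
    have hevv : v1 =ᶠ[𝓝 s] v := by
      filter_upwards [Iio_mem_nhds hsspr] with t ht
      exact hv1lt t ht
    have h := hLKS.2 s hs1 (EReal.coe_lt_coe_iff.2 hsspr)
    have hw1s : w1 s = w s := hw1lt s hsspr
    have hv1s : v1 s = v s := hv1lt s hsspr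
    refine ⟨by rw [hw1s]; exact h.1, ?_, ?_⟩
    · rw [hw1s, hv1s]
      exact h.2.1.congr_of_eventuallyEq hevw
    · rw [hw1s, hv1s]
      exact h.2.2.congr_of_eventuallyEq hevv
  · push_neg at hsspr
    have hs2' : s < sstar + ε := EReal.coe_lt_coe_iff.1 hs2
    have hsJ2 : s ∈ Ioo α (sstar + ε) := ⟨lt_of_lt_of_le hαspr hsspr, hs2'⟩
    have hJ2sub : Ioo α (sstar + ε) ⊆ Ioo (sstar - ε) (sstar + ε) :=
      fun x hx => ⟨lt_trans hα3 hx.1, hx.2⟩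
    have hval : ∀ t ∈ Ioo α (sstar + ε), w1 t = (f t).1 ∧ v1 t = (f t).2 := by
      intro t ht
      by_cases h : t < spr
      · have hft := heq t ht.1 h
        exact ⟨by rw [hw1lt t h, hft], by rw [hv1lt t h, hft]⟩
      · exact ⟨hw1ge t h, hv1ge t h⟩
    have hevw : w1 =ᶠ[𝓝 s] fun t => (f t).1 := by
      filter_upwards [isOpen_Ioo.mem_nhds hsJ2] with t ht using (hval t ht).1
    have hevv : v1 =ᶠ[𝓝 s] fun t => (f t).2 := by
      filter_upwards [isOpen_Ioo.mem_nhds hsJ2] with t ht using (hval t ht).2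
    have hstarJ2 : sstar ∈ Ioo α (sstar + ε) := ⟨hα1, by linarith⟩
    have hupos : ∀ t ∈ Ioo α (sstar + ε), 0 < (f t).1 := by
      intro t ht
      have hform := linODE_formula (u := fun t => (f t).1)
        (g := fun t => (a-1) * (f t).2 - σ) isOpen_Ioo Set.ordConnected_Ioo
        (fun x hx => by
          have hd := hasDerivAt_fst (hfd x (hJ2sub hx))
          simpa [Fvec] using hd)
        (fun x hx => ContinuousAt.continuousWithinAt (by
          exact ((hasDerivAt_snd (hfd x (hJ2sub hx))).continuousAt.const_mul
            (a-1)).sub continuousAt_const))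
        hstarJ2 ht
      have h10 : (f t).1 = w sstar * Real.exp (∫ τ in sstar..t, ((a-1) * (f τ).2 - σ)) := by
        simpa [hf0] using hform
      rw [h10]
      have := hwpos sstar hs₁star.le hstarspr
      positivity
    have hfds := hfd s (hJ2sub hsJ2)
    have hw1s : w1 s = (f s).1 := (hval s hsJ2).1
    have hv1s : v1 s = (f s).2 := (hval s hsJ2).2
    refine ⟨by rw [hw1s]; exact hupos s hsJ2, ?_, ?_⟩
    · have hd := hasDerivAt_fst hfds
      have hval' : (Fvec a σ γ lam (f s)).1 = w1 s * ((a - 1) * v1 s - σ) := by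
        rw [hw1s, hv1s]; simp [Fvec]
      rw [← hval']
      exact hd.congr_of_eventuallyEq hevw
    · have hd := hasDerivAt_snd hfds
      have hval' : (Fvec a σ γ lam (f s)).2 = lam / γ - v1 s ^ 2 - w1 s / γ := by
        rw [hw1s, hv1s]; simp [Fvec]
      rw [← hval']
      exact hd.congr_of_eventuallyEq hevv


/-- The trapping lemma: `v` eventually stays below any `-M`. -/
lemma v_eventually_le (a σ γ lam : ℝ) (hγ : 0 < γ) (hlam : 0 < lam)
    (sm : EReal) (spr : ℝ) (w v : ℝ → ℝ)
    (hsol : IsMaxLKSSol a σ γ lam sm (spr : EReal) w v)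
    (M b : ℝ) (hbm : sm < (b : EReal)) (hbp : b < spr) :
    ∃ s₄ : ℝ, b ≤ s₄ ∧ s₄ < spr ∧ ∀ s, s₄ ≤ s → s < spr → v s ≤ -M := by
  have hLKS := hsol.1
  have hmem : ∀ s : ℝ, b ≤ s → s < spr → sm < (s : EReal) ∧ (s : EReal) < (spr : EReal) :=
    fun s h1 h2 => ⟨lt_of_lt_of_le hbm (EReal.coe_le_coe_iff.2 h1), EReal.coe_lt_coe_iff.2 h2⟩
  have hwpos : ∀ s : ℝ, b ≤ s → s < spr → 0 < w s :=
    fun s h1 h2 => (hLKS.2 s (hmem s h1 h2).1 (hmem s h1 h2).2).1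
  have hv' : ∀ s : ℝ, b ≤ s → s < spr →
      HasDerivAt v (lam / γ - v s ^ 2 - w s / γ) s :=
    fun s h1 h2 => (hLKS.2 s (hmem s h1 h2).1 (hmem s h1 h2).2).2.2
  set c : ℝ := Real.sqrt (lam / γ) with hc_def
  have hc2 : c ^ 2 = lam / γ := Real.sq_sqrt (by positivity)
  set M' : ℝ := max M c + 1 with hM'_def
  obtain ⟨sst, hsst1, hsst2, hsst3⟩ :=
    v_unbounded_below a σ γ lam hγ hlam sm spr w v hsol M' b hbm hbp
  have hMM' : -M' < -M := by
    have := le_max_left M c; simp only [hM'_def]; linarith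
  have hcM' : c < M' := by
    have := le_max_right M c; simp only [hM'_def]; linarith
  refine ⟨sst, hsst1.le, hsst2, ?_⟩
  intro s hs1 hs2
  -- claim: v s ≤ v sst
  have hclaim : v s ≤ v sst := by
    by_contra hbad
    push_neg at hbad
    set A : Set ℝ := {t ∈ Icc sst s | v t ≤ v sst} with hA_def
    have hvc : ContinuousOn v (Icc sst s) := fun x hx =>
      (hv' x (le_trans hsst1.le hx.1) (lt_of_le_of_lt hx.2 hs2)).continuousAt.continuousWithinAt
    have hAclosed : IsClosed A := hvc.preimage_isClosed_of_isClosed isClosed_Icc isClosed_Iic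
    have hAne : A.Nonempty := ⟨sst, ⟨le_rfl, hs1⟩, le_rfl⟩
    have hAbdd : BddAbove A := ⟨s, fun x hx => hx.1.2⟩
    set t₁ : ℝ := sSup A with ht₁_def
    have ht₁A : t₁ ∈ A := hAclosed.csSup_mem hAne hAbdd
    have ht₁s : t₁ < s := by
      rcases eq_or_lt_of_le ht₁A.1.2 with h | h
      · exfalso; rw [← h] at hbad; exact absurd ht₁A.2 (not_le.2 hbad)
      · exact h
    have hgt : ∀ u, t₁ < u → u ≤ s → v sst < v u := by
      intro u hu1 hu2
      by_contra h
      push_neg at h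
      have huA : u ∈ A := ⟨⟨le_trans ht₁A.1.1 hu1.le, hu2⟩, h⟩
      exact absurd (le_csSup hAbdd huA) (not_le.2 hu1)
    -- derivative at t₁ is negative
    have ht₁b : b ≤ t₁ := le_trans hsst1.le ht₁A.1.1
    have ht₁spr : t₁ < spr := lt_of_lt_of_le ht₁s hs2.le
    have hvt₁ : v t₁ < -c - 1 := by
      have := hsst3
      have h2 := ht₁A.2
      have hcnn : 0 ≤ c := Real.sqrt_nonneg _
      simp only [hM'_def] at hsst3
      have := le_max_right M c
      linarith
    have hdneg : lam / γ - v t₁ ^ 2 - w t₁ / γ < 0 := by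
      have h1 := hwpos t₁ ht₁b ht₁spr
      have h2 : 0 < w t₁ / γ := by positivity
      have hcnn : 0 ≤ c := Real.sqrt_nonneg _
      nlinarith [sq_nonneg (v t₁ + c + 1)]
    have hder := hv' t₁ ht₁b ht₁spr
    rw [hasDerivAt_iff_tendsto_slope] at hder
    have hneg : ∀ᶠ u in 𝓝[≠] t₁, slope v t₁ u < 0 :=
      hder (Iio_mem_nhds hdneg)
    have hmono : 𝓝[>] t₁ ≤ 𝓝[≠] t₁ :=
      nhdsWithin_mono _ (fun u hu => ne_of_gt hu)
    have hev : ∀ᶠ u in 𝓝[>] t₁, slope v t₁ u < 0 ∧ u ∈ Ioo t₁ s := by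
      filter_upwards [hmono hneg, Ioo_mem_nhdsGT_of_mem ⟨le_rfl, ht₁s⟩] with u h1 h2
      exact ⟨h1, h2⟩
    obtain ⟨u, hu1, hu2⟩ := hev.exists
    have hupos : 0 < u - t₁ := sub_pos.2 hu2.1
    have hvu : v u < v t₁ := by
      have h := hu1
      rw [slope_def_field] at h
      rw [div_neg_iff] at h
      rcases h with ⟨h1, h2⟩ | ⟨h1, h2⟩
      · linarith
      · linarith
    exact absurd (hgt u hu2.1 hu2.2.le) (not_lt.2 (le_trans hvu.le ht₁A.2))
  linarith [hsst3]

/-- splitting of the exponent integral -/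
lemma integral_split (a σ : ℝ) {v : ℝ → ℝ} {s0 s : ℝ}
    (hInt : IntervalIntegrable v MeasureTheory.volume s0 s) :
    (∫ τ in s0..s, ((a-1) * v τ - σ)) = (a-1) * (∫ τ in s0..s, v τ) - σ * (s - s0) := by
  rw [intervalIntegral.integral_sub (hInt.const_mul (a-1)) intervalIntegrable_const,
    intervalIntegral.integral_const_mul, intervalIntegral.integral_const]
  simp [smul_eq_mul]; ring

set_option maxHeartbeats 1000000 in
/-- Main analytic lemma: the integral of `v` tends to `-∞`. -/
lemma intv_tendsto_atBot (a σ γ lam : ℝ) (hσ : 0 < σ) (hγ : 0 < γ) (hlam : 0 < lam)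
    (sm : EReal) (spr : ℝ) (w v : ℝ → ℝ)
    (hsol : IsMaxLKSSol a σ γ lam sm (spr : EReal) w v)
    (s0 : ℝ) (hs0m : sm < (s0 : EReal)) (hs0p : s0 < spr) :
    Tendsto (fun s => ∫ τ in s0..s, v τ) (𝓝[<] spr) atBot := by
  have hLKS := hsol.1
  have hmem : ∀ s : ℝ, s0 ≤ s → s < spr → sm < (s : EReal) ∧ (s : EReal) < (spr : EReal) :=
    fun s h1 h2 => ⟨lt_of_lt_of_le hs0m (EReal.coe_le_coe_iff.2 h1), EReal.coe_lt_coe_iff.2 h2⟩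
  have hwpos : ∀ s : ℝ, s0 ≤ s → s < spr → 0 < w s :=
    fun s h1 h2 => (hLKS.2 s (hmem s h1 h2).1 (hmem s h1 h2).2).1
  have hv' : ∀ s : ℝ, s0 ≤ s → s < spr →
      HasDerivAt v (lam / γ - v s ^ 2 - w s / γ) s :=
    fun s h1 h2 => (hLKS.2 s (hmem s h1 h2).1 (hmem s h1 h2).2).2.2
  have hvc : ∀ p q : ℝ, s0 ≤ p → q < spr → p ≤ q → ContinuousOn v (Icc p q) :=
    fun p q h1 h2 _ => fun x hx =>
      (hv' x (le_trans h1 hx.1) (lt_of_le_of_lt hx.2 h2)).continuousAt.continuousWithinAt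
  have hvInt : ∀ p q : ℝ, s0 ≤ p → q < spr → p ≤ q →
      IntervalIntegrable v MeasureTheory.volume p q := by
    intro p q h1 h2 h3
    exact ((hvc p q h1 h2 h3).mono (by rw [uIcc_of_le h3])).intervalIntegrable
  set I : ℝ → ℝ := fun s => ∫ τ in s0..s, v τ with hI_def
  by_contra hnot
  rw [tendsto_atBot] at hnot
  push_neg at hnot
  obtain ⟨b, hb⟩ := hnot
  have hb' : ∃ᶠ x in 𝓝[<] spr, b < I x := hb
  -- v ≤ -1 from s₂ on
  obtain ⟨s₂, hs₂0, hs₂spr, hs₂⟩ :=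
    v_eventually_le a σ γ lam hγ hlam sm spr w v hsol 1 s0 hs0m hs0p
  have hs₂m : sm < (s₂ : EReal) := lt_of_lt_of_le hs0m (EReal.coe_le_coe_iff.2 hs₂0)
  -- I is antitone on [s₂, spr)
  have hanti : ∀ p q : ℝ, s₂ ≤ p → p ≤ q → q < spr → I q ≤ I p := by
    intro p q h1 h2 h3
    have hadd : I p + ∫ τ in p..q, v τ = I q := by
      simp only [hI_def]
      exact intervalIntegral.integral_add_adjacent_intervals
        (hvInt s0 p le_rfl (lt_of_le_of_lt h2 h3) (le_trans hs₂0 h1))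
        (hvInt p q (le_trans hs₂0 h1) h3 h2)
    have hneg : (∫ τ in p..q, v τ) ≤ 0 := by
      have h0 : (∫ τ in p..q, (0:ℝ)) = 0 := by simp
      rw [← h0]
      apply intervalIntegral.integral_mono_on h2 (hvInt p q (le_trans hs₂0 h1) h3 h2)
        intervalIntegrable_const
      intro u hu
      have := hs₂ u (le_trans h1 hu.1) (lt_of_le_of_lt hu.2 h3)
      linarith
    linarith
  -- I bounded below by b on [s₂, spr)
  have hlow : ∀ p : ℝ, s₂ ≤ p → p < spr → b < I p := by
    intro p h1 h2
    have hev : Ioo p spr ∈ 𝓝[<] spr := Ioo_mem_nhdsLT_of_mem ⟨h2, le_rfl⟩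
    obtain ⟨x, hbx, hx⟩ := (hb'.and_eventually hev).exists
    exact lt_of_lt_of_le hbx (hanti p x h1 hx.1.le hx.2)
  -- w bounded above on [s₂, spr)
  obtain ⟨sβ, hsβ1, hsβ2⟩ : ∃ x : ℝ, sm < (x:EReal) ∧ x < s0 := by
    obtain ⟨x, hx1, hx2⟩ := EReal.lt_iff_exists_real_btwn.1 hs0m
    exact ⟨x, hx1, EReal.coe_lt_coe_iff.1 hx2⟩
  have hJw_sub : ∀ x ∈ Ioo sβ spr, sm < (x:EReal) ∧ (x:EReal) < (spr:EReal) := fun x hx =>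
    ⟨lt_trans hsβ1 (EReal.coe_lt_coe_iff.2 hx.1), EReal.coe_lt_coe_iff.2 hx.2⟩
  have hs0Jw : s0 ∈ Ioo sβ spr := ⟨hsβ2, hs0p⟩
  have hvcJ : ContinuousOn v (Ioo sβ spr) := fun x hx =>
    ((hLKS.2 x (hJw_sub x hx).1 (hJw_sub x hx).2).2.2).continuousAt.continuousWithinAt
  have hw_eq : ∀ s : ℝ, s0 ≤ s → s < spr →
      w s = w s0 * Real.exp ((a-1) * I s - σ * (s - s0)) := by
    intro s h1 h2
    have hsJ : s ∈ Ioo sβ spr := ⟨lt_of_lt_of_le hsβ2 h1, h2⟩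
    have := linODE_formula isOpen_Ioo Set.ordConnected_Ioo
      (fun x hx => (hLKS.2 x (hJw_sub x hx).1 (hJw_sub x hx).2).2.1)
      ((continuousOn_const.mul hvcJ).sub continuousOn_const) hs0Jw hsJ
    rw [this, integral_split a σ (hvInt s0 s le_rfl h2 h1)]
  set BI : ℝ := |b| + |I s₂| with hBI_def
  set W : ℝ := w s0 * Real.exp (|a-1| * BI) with hW_def
  have hW0 : 0 < W := by
    have := hwpos s0 le_rfl hs0p
    positivity
  have hwW : ∀ s : ℝ, s₂ ≤ s → s < spr → w s ≤ W := by
    intro s h1 h2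
    rw [hw_eq s (le_trans hs₂0 h1) h2]
    simp only [hW_def]
    apply mul_le_mul_of_nonneg_left _ (hwpos s0 le_rfl hs0p).le
    apply Real.exp_le_exp.2
    have hIs1 : b < I s := hlow s h1 h2
    have hIs2 : I s ≤ I s₂ := hanti s₂ s le_rfl h1 h2
    have habs : |I s| ≤ BI := by
      rw [abs_le]
      have h3 := neg_abs_le b; have h4 := le_abs_self (I s₂)
      have h5 := abs_nonneg b; have h6 := abs_nonneg (I s₂)
      simp only [hBI_def]
      constructor <;> linarith
    have h7 : (a-1) * I s ≤ |a-1| * BI := by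
      calc (a-1) * I s ≤ |(a-1) * I s| := le_abs_self _
        _ = |a-1| * |I s| := abs_mul _ _
        _ ≤ |a-1| * BI := mul_le_mul_of_nonneg_left habs (abs_nonneg _)
    have h8 : 0 ≤ σ * (s - s0) := by
      apply mul_nonneg hσ.le
      have := le_trans hs₂0 h1; linarith
    linarith
  -- threshold
  set c₀ : ℝ := Real.sqrt (2 * lam / γ) + Real.sqrt (W / γ) + 1 with hc₀_def
  have hsq1 : Real.sqrt (2 * lam / γ) ^ 2 = 2 * lam / γ := Real.sq_sqrt (by positivity)
  have hsq2 : Real.sqrt (W / γ) ^ 2 = W / γ := Real.sq_sqrt (by positivity)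
  have hc₀pos : 0 < c₀ := by
    have := Real.sqrt_nonneg (2 * lam / γ); have := Real.sqrt_nonneg (W / γ)
    simp only [hc₀_def]; linarith
  obtain ⟨s₃, hs₃2, hs₃spr, hs₃⟩ :=
    v_eventually_le a σ γ lam hγ hlam sm spr w v hsol c₀ s₂ hs₂m hs₂spr
  have hs₃0 : s0 ≤ s₃ := le_trans hs₂0 hs₃2
  -- y := -1/v
  set y : ℝ → ℝ := fun s => -(v s)⁻¹ with hy_def
  have hvneg : ∀ s : ℝ, s₃ ≤ s → s < spr → v s < 0 := by
    intro s h1 h2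
    have := hs₃ s h1 h2
    linarith
  have hvsq : ∀ s : ℝ, s₃ ≤ s → s < spr → W / γ ≤ v s ^ 2 ∧ 2 * lam / γ ≤ v s ^ 2 := by
    intro s h1 h2
    have h3 := hs₃ s h1 h2
    simp only [hc₀_def] at h3
    have h4 := Real.sqrt_nonneg (2 * lam / γ); have h5 := Real.sqrt_nonneg (W / γ)
    constructor
    · have h6 : Real.sqrt (W / γ) ≤ -v s := by linarith
      nlinarith [mul_le_mul h6 h6 h5 (by linarith : (0:ℝ) ≤ -v s), hsq2]
    · have h6 : Real.sqrt (2 * lam / γ) ≤ -v s := by linarith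
      nlinarith [mul_le_mul h6 h6 h4 (by linarith : (0:ℝ) ≤ -v s), hsq1]
  have hy' : ∀ s : ℝ, s₃ ≤ s → s < spr →
      HasDerivAt y ((lam / γ - v s ^ 2 - w s / γ) / (v s) ^ 2) s := by
    intro s h1 h2
    have hne : v s ≠ 0 := (hvneg s h1 h2).ne
    have := ((hv' s (le_trans hs₃0 h1) h2).inv hne).neg
    exact this.congr_deriv (by ring)
  -- y p ≤ y q + 2 (q - p)
  have hykey : ∀ p q : ℝ, s₃ ≤ p → p ≤ q → q < spr → y p ≤ y q + 2 * (q - p) := by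
    intro p q h1 h2 h3
    have := deriv_nonpos_le (f := fun t => -(y t) - 2 * t)
      (f' := fun t => -((lam / γ - v t ^ 2 - w t / γ) / (v t) ^ 2) - 2) h2
      (fun x hx => by
        have hd := (hy' x (le_trans h1 hx.1) (lt_of_le_of_lt hx.2 h3)).neg.sub
          ((hasDerivAt_id x).const_mul 2)
        exact hd.congr_deriv (by ring))
      (fun x hx => by
        show -((lam / γ - v x ^ 2 - w x / γ) / (v x) ^ 2) - 2 ≤ 0
        have hx1 : s₃ ≤ x := le_trans h1 hx.1
        have hx2 : x < spr := lt_of_le_of_lt hx.2 h3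
        have hq : 0 < (v x) ^ 2 := by nlinarith [hvneg x hx1 hx2]
        have h5 := hwW x (le_trans hs₃2 hx1) hx2
        have h6 := (hvsq x hx1 hx2).1
        have h7 : w x / γ ≤ W / γ := (div_le_div_iff_of_pos_right hγ).2 h5
        have hl : 0 < lam / γ := by positivity
        have h8 : -2 ≤ (lam / γ - v x ^ 2 - w x / γ) / (v x) ^ 2 := by
          rw [le_div_iff₀ hq]; linarith
        linarith)
    have h9 : -(y q) - 2 * q ≤ -(y p) - 2 * p := this
    linarith
  -- y → 0
  have hvbot : Tendsto v (𝓝[<] spr) atBot := by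
    rw [tendsto_atBot]
    intro bb
    obtain ⟨s₄, hs₄1, hs₄2, hs₄⟩ :=
      v_eventually_le a σ γ lam hγ hlam sm spr w v hsol (-bb) s0 hs0m hs0p
    filter_upwards [Ioo_mem_nhdsLT_of_mem (⟨hs₄2, le_rfl⟩ : spr ∈ Ioc s₄ spr)] with x hx
    have := hs₄ x hx.1.le hx.2
    linarith
  have hytend : Tendsto y (𝓝[<] spr) (𝓝 0) := by
    have h1 : Tendsto (fun s => -v s) (𝓝[<] spr) atTop := tendsto_neg_atBot_atTop.comp hvbot
    have h2 := tendsto_inv_atTop_zero.comp h1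
    have h3 : ((fun r : ℝ => r⁻¹) ∘ fun s => -v s) = y := by
      funext s; simp only [hy_def, Function.comp_apply]; rw [inv_neg]
    rwa [h3] at h2
  have hyle : ∀ p : ℝ, s₃ ≤ p → p < spr → y p ≤ 2 * (spr - p) := by
    intro p h1 h2
    have hT : Tendsto (fun q => y q + 2 * (q - p)) (𝓝[<] spr) (𝓝 (0 + 2 * (spr - p))) := by
      apply hytend.add
      have hc : Continuous (fun q : ℝ => 2 * (q - p)) :=
        continuous_const.mul (continuous_id.sub continuous_const)
      exact (hc.tendsto spr).mono_left nhdsWithin_le_nhds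
    have hev : ∀ᶠ q in 𝓝[<] spr, y p ≤ y q + 2 * (q - p) := by
      filter_upwards [Ioo_mem_nhdsLT_of_mem (⟨h2, le_rfl⟩ : spr ∈ Ioc p spr)] with q hq
      exact hykey p q h1 hq.1.le hq.2
    have := ge_of_tendsto hT hev
    linarith
  have hvbound : ∀ p : ℝ, s₃ ≤ p → p < spr → v p ≤ -(2 * (spr - p))⁻¹ := by
    intro p h1 h2
    have hvn := hvneg p h1 h2
    have hyp : 0 < y p := by
      simp only [hy_def]
      have : (v p)⁻¹ < 0 := inv_lt_zero.2 hvn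
      linarith
    have hle := hyle p h1 h2
    have h3 : (2 * (spr - p))⁻¹ ≤ (y p)⁻¹ := inv_anti₀ hyp hle
    have h4 : (y p)⁻¹ = -v p := by
      simp only [hy_def]; rw [inv_neg, inv_inv]
    linarith
  -- integral comparison
  have hint2 : ∀ s : ℝ, s₃ ≤ s → s < spr →
      IntervalIntegrable (fun τ => -(2 * (spr - τ))⁻¹) MeasureTheory.volume s₃ s := by
    intro s h1 h2
    apply ContinuousOn.intervalIntegrable
    apply ContinuousOn.neg
    apply ContinuousOn.inv₀
    · exact (continuous_const.mul (continuous_const.sub continuous_id)).continuousOn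
    · intro x hx
      rw [uIcc_of_le h1] at hx
      have : x < spr := lt_of_le_of_lt hx.2 h2
      have : 0 < spr - x := by linarith
      positivity
  have hIbound : ∀ s : ℝ, s₃ ≤ s → s < spr →
      I s ≤ I s₃ + (1/2) * Real.log (spr - s) - (1/2) * Real.log (spr - s₃) := by
    intro s h1 h2
    have hadd : I s₃ + ∫ τ in s₃..s, v τ = I s := by
      simp only [hI_def]
      exact intervalIntegral.integral_add_adjacent_intervals
        (hvInt s0 s₃ le_rfl hs₃spr hs₃0) (hvInt s₃ s hs₃0 h2 h1)
    have hmono : (∫ τ in s₃..s, v τ) ≤ ∫ τ in s₃..s, -(2 * (spr - τ))⁻¹ := by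
      apply intervalIntegral.integral_mono_on h1 (hvInt s₃ s hs₃0 h2 h1) (hint2 s h1 h2)
      intro x hx
      exact hvbound x hx.1 (lt_of_le_of_lt hx.2 h2)
    have hftc : (∫ τ in s₃..s, -(2 * (spr - τ))⁻¹)
        = (1/2) * Real.log (spr - s) - (1/2) * Real.log (spr - s₃) := by
      have hders : ∀ τ ∈ uIcc s₃ s,
          HasDerivAt (fun τ => (1/2) * Real.log (spr - τ)) (-(2 * (spr - τ))⁻¹) τ := by
        intro τ hτ
        rw [uIcc_of_le h1] at hτ
        have hτspr : τ < spr := lt_of_le_of_lt hτ.2 h2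
        have hne : spr - τ ≠ 0 := ne_of_gt (by linarith)
        have hd1 : HasDerivAt (fun x : ℝ => spr - x) (-1) τ := by
          simpa using (hasDerivAt_id τ).const_sub spr
        have hd2 := (Real.hasDerivAt_log hne).comp τ hd1
        have hd3 := hd2.const_mul (1/2 : ℝ)
        exact hd3.congr_deriv (by rw [mul_inv]; ring)
      rw [intervalIntegral.integral_eq_sub_of_hasDerivAt hders (hint2 s h1 h2)]
    linarith
  -- contradiction
  have hlog : Tendsto (fun s => Real.log (spr - s)) (𝓝[<] spr) atBot := by
    apply Real.tendsto_log_nhdsGT_zero.comp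
    apply tendsto_nhdsWithin_of_tendsto_nhds_of_eventually_within
    · have h1 : Tendsto (fun s : ℝ => spr - s) (𝓝 spr) (𝓝 (spr - spr)) :=
        (continuous_const.sub continuous_id).tendsto spr
      simpa using h1.mono_left nhdsWithin_le_nhds
    · filter_upwards [self_mem_nhdsWithin] with x hx
      exact sub_pos.2 (mem_Iio.1 hx)
  have hev1 : ∀ᶠ s in 𝓝[<] spr,
      I s₃ + (1/2) * Real.log (spr - s) - (1/2) * Real.log (spr - s₃) < b := by
    filter_upwards [hlog.eventually_le_atBot
      ((b - I s₃ + (1/2) * Real.log (spr - s₃) - 1) * 2)] with s hs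
    linarith
  have hev2 : Ioo s₃ spr ∈ 𝓝[<] spr := Ioo_mem_nhdsLT_of_mem ⟨hs₃spr, le_rfl⟩
  obtain ⟨x, hbx, hx1, hx2⟩ := (hb'.and_eventually (hev1.and hev2)).exists
  have := hIbound x hx2.1.le hx2.2
  linarith


/-- If `(w, v)` is a maximal positive solution of (LKS) on
`(s₋, s₊)` with `s₊ < +∞`, and `S(s) = S₀ exp(∫_{s₀}^s v)`, `u = w·S`, then
`S → 0` and `u → 0` as `s → s₊⁻`. -/
theorem stmt10 (a σ γ lam : ℝ) (ha : 0 < a) (hσ : 0 < σ) (hγ : 0 < γ) (hlam : 0 < lam)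
    (sm : EReal) (spr : ℝ) (w v : ℝ → ℝ)
    (hsol : IsMaxLKSSol a σ γ lam sm (spr : EReal) w v)
    (s0 : ℝ) (hs0m : sm < (s0 : EReal)) (hs0p : s0 < spr)
    (S0 : ℝ) (hS0 : 0 < S0) :
    Tendsto (fun s => S0 * Real.exp (∫ τ in s0..s, v τ)) (𝓝[<] spr) (𝓝 0) ∧
    Tendsto (fun s => w s * (S0 * Real.exp (∫ τ in s0..s, v τ))) (𝓝[<] spr) (𝓝 0) := by
  have hIbot := intv_tendsto_atBot a σ γ lam hσ hγ hlam sm spr w v hsol s0 hs0m hs0p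
  have hLKS := hsol.1
  constructor
  · have h1 : Tendsto (fun s => S0 * Real.exp (∫ τ in s0..s, v τ)) (𝓝[<] spr) (𝓝 (S0 * 0)) :=
      (Real.tendsto_exp_atBot.comp hIbot).const_mul S0
    simpa using h1
  · -- the exact formula for w
    obtain ⟨sβ, hsβ1, hsβ2⟩ : ∃ x : ℝ, sm < (x:EReal) ∧ x < s0 := by
      obtain ⟨x, hx1, hx2⟩ := EReal.lt_iff_exists_real_btwn.1 hs0m
      exact ⟨x, hx1, EReal.coe_lt_coe_iff.1 hx2⟩
    have hJw_sub : ∀ x ∈ Ioo sβ spr, sm < (x:EReal) ∧ (x:EReal) < (spr:EReal) := fun x hx =>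
      ⟨lt_trans hsβ1 (EReal.coe_lt_coe_iff.2 hx.1), EReal.coe_lt_coe_iff.2 hx.2⟩
    have hs0Jw : s0 ∈ Ioo sβ spr := ⟨hsβ2, hs0p⟩
    have hvcJ : ContinuousOn v (Ioo sβ spr) := fun x hx =>
      ((hLKS.2 x (hJw_sub x hx).1 (hJw_sub x hx).2).2.2).continuousAt.continuousWithinAt
    have hw_eq : ∀ s : ℝ, s0 ≤ s → s < spr →
        w s = w s0 * Real.exp ((a-1) * (∫ τ in s0..s, v τ) - σ * (s - s0)) := by
      intro s h1 h2
      have hsJ : s ∈ Ioo sβ spr := ⟨lt_of_lt_of_le hsβ2 h1, h2⟩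
      have hInt : IntervalIntegrable v MeasureTheory.volume s0 s :=
        (hvcJ.mono ((Set.ordConnected_Ioo).uIcc_subset hs0Jw hsJ)).intervalIntegrable
      have := linODE_formula isOpen_Ioo Set.ordConnected_Ioo
        (fun x hx => (hLKS.2 x (hJw_sub x hx).1 (hJw_sub x hx).2).2.1)
        ((continuousOn_const.mul hvcJ).sub continuousOn_const) hs0Jw hsJ
      rw [this, integral_split a σ hInt]
    have hev : ∀ᶠ s in 𝓝[<] spr, w s * (S0 * Real.exp (∫ τ in s0..s, v τ))
        = (w s0 * S0) * Real.exp (a * (∫ τ in s0..s, v τ) - σ * (s - s0)) := by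
      filter_upwards [Ioo_mem_nhdsLT_of_mem (⟨hs0p, le_rfl⟩ : spr ∈ Ioc s0 spr)] with s hs
      rw [hw_eq s hs.1.le hs.2]
      rw [show a * (∫ τ in s0..s, v τ) - σ * (s - s0)
          = ((a-1) * (∫ τ in s0..s, v τ) - σ * (s - s0)) + (∫ τ in s0..s, v τ) by ring,
        Real.exp_add]
      ring
    have hexp : Tendsto (fun s => a * (∫ τ in s0..s, v τ) - σ * (s - s0)) (𝓝[<] spr) atBot := by
      have h1 : Tendsto (fun s => a * (∫ τ in s0..s, v τ)) (𝓝[<] spr) atBot := by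
        exact Tendsto.const_mul_atBot ha hIbot
      have h2 : Tendsto (fun s : ℝ => -(σ * (s - s0))) (𝓝[<] spr) (𝓝 (-(σ * (spr - s0)))) :=
        (((continuous_const.mul (continuous_id.sub continuous_const)).neg).tendsto spr).mono_left
          nhdsWithin_le_nhds
      have h3 := Filter.Tendsto.add_atBot h2 h1
      have h4 : (fun s : ℝ => -(σ * (s - s0)) + a * (∫ τ in s0..s, v τ))
          = fun s => a * (∫ τ in s0..s, v τ) - σ * (s - s0) := by
        funext s; ring
      rwa [h4] at h3
    have htend : Tendsto (fun s => (w s0 * S0) *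
        Real.exp (a * (∫ τ in s0..s, v τ) - σ * (s - s0))) (𝓝[<] spr) (𝓝 ((w s0 * S0) * 0)) :=
      (Real.tendsto_exp_atBot.comp hexp).const_mul (w s0 * S0)
    have := Tendsto.congr' (EventuallyEq.symm hev) htend
    simpa using this
end
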